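/- arXiv:2003.03731 — 9 statements merged into one kernel-verified Lean document; each statement's English description precedes it below -/
import Mathlib

section
/- Let ℓ, n be positive integers, let A ∈ ℝ^{ℓ×n} have all rational entries, let c ∈ ℝ^ℓ, and let X ⊆ ℝⁿ be a nonempty compact convex set. Set f = Sig(c,A) and f* = inf_{x∈X} f(x). Let A' ∈ ℝ^{(ℓ+1)×n} be the matrix obtained from A by appending a zero row. Then for every real λ < f*, there exists p ∈ ℕ such that the function x ↦ (∑_{j=1}^{ℓ+1} exp(A'_j · x))^p · (f(x) − λ) is X-SAGE with exponents in E_{p+1}(A'). -/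
open scoped BigOperators

/-- The signomial `Sig(c, A)(x) = ∑ j, c j * exp(A j ⬝ x)`. -/
noncomputable def Sig {ℓ n : ℕ} (c : Fin ℓ → ℝ) (A : Fin ℓ → Fin n → ℝ) :
    (Fin n → ℝ) → ℝ :=
  fun x => ∑ j, c j * Real.exp (∑ i, A j i * x i)

/-- `g` is an `X`-AGE function with exponents in the finite set `E`:
it is a signomial supported on `E` with at most one negative coefficient,
and it is nonnegative on `X`. -/
def IsAGE {n : ℕ} (X : Set (Fin n → ℝ)) (E : Finset (Fin n → ℝ))
    (g : (Fin n → ℝ) → ℝ) : Prop :=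
  (∃ d : (Fin n → ℝ) → ℝ,
      (∀ x, g x = ∑ α ∈ E, d α * Real.exp (∑ i, α i * x i)) ∧
      ∃ α₀, ∀ α ∈ E, α ≠ α₀ → 0 ≤ d α) ∧
    ∀ x ∈ X, 0 ≤ g x

/-- `g` is `X`-SAGE with exponents in `E`: a finite sum of `X`-AGE functions
with exponents in `E`. -/
def IsSAGE {n : ℕ} (X : Set (Fin n → ℝ)) (E : Finset (Fin n → ℝ))
    (g : (Fin n → ℝ) → ℝ) : Prop :=
  ∃ (k : ℕ) (gs : Fin k → (Fin n → ℝ) → ℝ),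
    (∀ j, IsAGE X E (gs j)) ∧ ∀ x, g x = ∑ j, gs j x

/-- `E_q(A) = { ∑ j, m j • A j : m ∈ ℕ^ℓ, ∑ j, m j = q }` as a finite set.
(Each `m j ≤ q`, so indexing by `Fin (q+1)` captures all of them.) -/
noncomputable def expSet {ℓ n : ℕ} (A : Fin ℓ → Fin n → ℝ) (q : ℕ) :
    Finset (Fin n → ℝ) :=
  Finset.image (fun m : Fin ℓ → Fin (q + 1) => fun i => ∑ j, (m j : ℕ) * A j i)
    (Finset.univ.filter fun m : Fin ℓ → Fin (q + 1) => ∑ j, (m j : ℕ) = q)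

/-- `A` with a zero row appended at the end. -/
noncomputable def appendZeroRow {ℓ n : ℕ} (A : Fin ℓ → Fin n → ℝ) :
    Fin (ℓ + 1) → Fin n → ℝ :=
  Fin.snoc A (fun _ => 0)

open Finset

namespace SageAux
variable {L : ℕ}

def bump (j : Fin L) (k : Fin L → ℕ) : Fin L → ℕ := fun i => if i = j then k i + 1 else k i

lemma sum_bump (j : Fin L) (k : Fin L → ℕ) :
    ∑ i, bump j k i = (∑ i, k i) + 1 := by
  unfold bump
  have : ∀ i : Fin L, (if i = j then k i + 1 else k i) = k i + (if i = j then 1 else 0) := by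
    intro i; split <;> simp
  simp_rw [this, Finset.sum_add_distrib, Finset.sum_ite_eq' univ j (fun _ => 1),
    if_pos (mem_univ j)]

lemma prod_fact_bump (j : Fin L) (k : Fin L → ℕ) :
    ∏ i, (bump j k i).factorial = (k j + 1) * ∏ i, (k i).factorial := by
  rw [← Finset.prod_erase_mul univ _ (mem_univ j), ← Finset.prod_erase_mul univ _ (mem_univ j)]
  have h1 : ∀ i ∈ univ.erase j, (bump j k i).factorial = (k i).factorial := by
    intro i hi
    have := Finset.ne_of_mem_erase hi
    simp [bump, this]
  rw [Finset.prod_congr rfl h1]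
  have : bump j k j = k j + 1 := by simp [bump]
  rw [this, Nat.factorial_succ]
  ring

lemma mult_bump (j : Fin L) (k : Fin L → ℕ) :
    (k j + 1) * Nat.multinomial univ (bump j k) =
      ((∑ i, k i) + 1) * Nat.multinomial univ k := by
  have hP : 0 < ∏ i, (k i).factorial := Finset.prod_pos fun i _ => Nat.factorial_pos _
  apply Nat.eq_of_mul_eq_mul_left hP
  calc (∏ i, (k i).factorial) * ((k j + 1) * Nat.multinomial univ (bump j k))
      = (∏ i, (bump j k i).factorial) * Nat.multinomial univ (bump j k) := by
        rw [prod_fact_bump]; ring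
    _ = (∑ i, bump j k i).factorial := Nat.multinomial_spec _ _
    _ = ((∑ i, k i) + 1).factorial := by rw [sum_bump]
    _ = ((∑ i, k i) + 1) * (∑ i, k i).factorial := Nat.factorial_succ _
    _ = ((∑ i, k i) + 1) * ((∏ i, (k i).factorial) * Nat.multinomial univ k) := by
        rw [Nat.multinomial_spec]
    _ = (∏ i, (k i).factorial) * (((∑ i, k i) + 1) * Nat.multinomial univ k) := by ring

end SageAux

namespace SageAux
open Finset

def T (L q : ℕ) : Finset (Fin L → ℕ) := Finset.piAntidiag univ q

lemma mem_T {L q : ℕ} {m : Fin L → ℕ} : m ∈ T L q ↔ ∑ i, m i = q := by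
  simp [T, Finset.mem_piAntidiag]

def drop {L : ℕ} (j : Fin L) (m : Fin L → ℕ) : Fin L → ℕ := fun i => if i = j then m i - 1 else m i

lemma bump_drop {L : ℕ} (j : Fin L) (m : Fin L → ℕ) (hm : m j ≠ 0) : bump j (drop j m) = m := by
  funext i
  by_cases h : i = j <;> simp [bump, drop, h]
  · subst h; exact Nat.succ_pred_eq_of_pos (Nat.pos_of_ne_zero hm)

lemma drop_bump {L : ℕ} (j : Fin L) (k : Fin L → ℕ) : drop j (bump j k) = k := by
  funext i
  by_cases h : i = j <;> simp [bump, drop, h]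

lemma reindex {L : ℕ} (q : ℕ) (j : Fin L) (G : (Fin L → ℕ) → ℝ) :
    ∑ m ∈ T L (q+1), (m j : ℝ) * G m = ∑ k ∈ T L q, ((k j : ℝ) + 1) * G (bump j k) := by
  classical
  rw [← Finset.sum_filter_of_ne (p := fun m => m j ≠ 0)
    (fun m _ h => by intro h0; apply h; rw [h0]; simp)]
  apply Finset.sum_nbij' (i := drop j) (j := bump j)
  · intro m hm
    simp only [Finset.mem_filter] at hm
    obtain ⟨hm1, hm2⟩ := hm
    rw [mem_T] at hm1 ⊢
    have := sum_bump j (drop j m)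
    rw [bump_drop j m hm2, hm1] at this
    omega
  · intro k hk
    simp only [Finset.mem_filter]
    rw [mem_T] at hk ⊢
    constructor
    · rw [sum_bump, hk]
    · simp [bump]
  · intro m hm
    simp only [Finset.mem_filter] at hm
    exact bump_drop j m hm.2
  · intro k _
    exact drop_bump j k
  · intro m hm
    simp only [Finset.mem_filter] at hm
    rw [bump_drop j m hm.2]
    congr 1
    have : drop j m j = m j - 1 := by simp [drop]
    rw [this]
    have := Nat.succ_pred_eq_of_pos (Nat.pos_of_ne_zero hm.2)
    push_cast [Nat.cast_pred (Nat.pos_of_ne_zero hm.2)]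
    ring

end SageAux

namespace SageAux
open Finset

lemma prod_pow_bump {L : ℕ} (j : Fin L) (k : Fin L → ℕ) (g : Fin L → ℝ) :
    ∏ i, g i ^ bump j k i = g j * ∏ i, g i ^ k i := by
  have h : ∀ i : Fin L, g i ^ bump j k i = g i ^ k i * (if i = j then g i else 1) := by
    intro i
    by_cases h : i = j <;> simp [bump, h, pow_succ]
  rw [Finset.prod_congr rfl (fun i _ => h i), Finset.prod_mul_distrib,
    Finset.prod_ite_eq' univ j g, if_pos (mem_univ j)]
  ring

lemma deriv_id {L : ℕ} (q : ℕ) (j : Fin L) (g : Fin L → ℝ) :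
    ∑ m ∈ T L (q+1), (m j : ℝ) * ((Nat.multinomial univ m : ℝ) * ∏ i, g i ^ m i)
      = ((q:ℝ)+1) * (g j * (∑ i, g i) ^ q) := by
  rw [reindex]
  have key : ∀ k ∈ T L q,
      ((k j : ℝ) + 1) * ((Nat.multinomial univ (bump j k) : ℝ) * ∏ i, g i ^ bump j k i)
      = ((q:ℝ)+1) * (g j * ((Nat.multinomial univ k : ℝ) * ∏ i, g i ^ k i)) := by
    intro k hk
    rw [mem_T] at hk
    have h1 : ((k j : ℝ) + 1) * (Nat.multinomial univ (bump j k) : ℝ)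
        = ((q:ℝ)+1) * (Nat.multinomial univ k : ℝ) := by
      have h := mult_bump j k
      rw [hk] at h
      exact_mod_cast congrArg (fun t : ℕ => (t : ℝ)) h
    rw [prod_pow_bump]
    calc ((k j : ℝ) + 1) * ((Nat.multinomial univ (bump j k) : ℝ) * (g j * ∏ i, g i ^ k i))
        = (((k j : ℝ) + 1) * (Nat.multinomial univ (bump j k) : ℝ)) * (g j * ∏ i, g i ^ k i) := by
          ring
      _ = (((q:ℝ)+1) * (Nat.multinomial univ k : ℝ)) * (g j * ∏ i, g i ^ k i) := by rw [h1]
      _ = ((q:ℝ)+1) * (g j * ((Nat.multinomial univ k : ℝ) * ∏ i, g i ^ k i)) := by ring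
  rw [Finset.sum_congr rfl key, ← Finset.mul_sum, ← Finset.mul_sum]
  congr 1
  congr 1
  exact (Finset.sum_pow_eq_sum_piAntidiag univ g q).symm

/-- coefficient of the expanded modulated signomial (times `p+1`) -/
noncomputable def C {L : ℕ} (c' : Fin L → ℝ) (m : Fin L → ℕ) : ℝ :=
  (∑ j, c' j * (m j : ℝ)) * (Nat.multinomial univ m : ℝ)

lemma expansion {L : ℕ} (p : ℕ) (c' g : Fin L → ℝ) :
    ∑ m ∈ T L (p+1), C c' m * ∏ i, g i ^ m i
      = ((p:ℝ)+1) * ((∑ j, c' j * g j) * (∑ i, g i) ^ p) := by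
  have step : ∀ m ∈ T L (p+1), C c' m * ∏ i, g i ^ m i
      = ∑ j, c' j * ((m j : ℝ) * ((Nat.multinomial univ m : ℝ) * ∏ i, g i ^ m i)) := by
    intro m _
    rw [C, Finset.sum_mul, Finset.sum_mul]
    apply Finset.sum_congr rfl
    intro j _
    ring
  rw [Finset.sum_congr rfl step, Finset.sum_comm]
  have : ∀ j : Fin L, ∑ m ∈ T L (p+1),
      c' j * ((m j : ℝ) * ((Nat.multinomial univ m : ℝ) * ∏ i, g i ^ m i))
      = c' j * (((p:ℝ)+1) * (g j * (∑ i, g i) ^ p)) := by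
    intro j
    rw [← Finset.mul_sum, deriv_id]
  rw [Finset.sum_congr rfl (fun j _ => this j)]
  rw [show ((p:ℝ)+1) * ((∑ j, c' j * g j) * (∑ i, g i) ^ p)
      = ∑ j, c' j * (((p:ℝ)+1) * (g j * (∑ i, g i) ^ p)) by
    rw [Finset.sum_mul, Finset.mul_sum]
    exact Finset.sum_congr rfl fun j _ => by ring]

end SageAux

namespace SageAux
open Finset

lemma exp_le_quad {t : ℝ} (ht : |t| ≤ 1) : Real.exp t ≤ 1 + t + t^2 := by
  have h := Real.exp_bound ht (by norm_num : 0 < 2)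
  have hsum : ∑ m ∈ Finset.range 2, t ^ m / (m.factorial : ℝ) = 1 + t := by
    simp [Finset.sum_range_succ]
  rw [hsum] at h
  have h2 := (abs_le.mp h).2
  have h3 : |t| ^ 2 = t ^ 2 := sq_abs t
  norm_num at h2
  nlinarith [sq_abs t]

end SageAux

namespace SageAux
open Finset

variable {L n : ℕ}

noncomputable def Ex (a : Fin L → Fin n → ℝ) (j : Fin L) (x : Fin n → ℝ) : ℝ :=
  Real.exp (∑ i, a j i * x i)

noncomputable def expv (a : Fin L → Fin n → ℝ) (m : Fin L → ℕ) : Fin n → ℝ :=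
  fun i => ∑ j, (m j : ℝ) * a j i

noncomputable def ebeta (β x : Fin n → ℝ) : ℝ := Real.exp (∑ i, β i * x i)

lemma ebeta_pos (β x : Fin n → ℝ) : 0 < ebeta β x := Real.exp_pos _

lemma Ex_pos (a : Fin L → Fin n → ℝ) (j : Fin L) (x : Fin n → ℝ) : 0 < Ex a j x :=
  Real.exp_pos _

lemma prod_Ex_pow (a : Fin L → Fin n → ℝ) (m : Fin L → ℕ) (x : Fin n → ℝ) :
    ∏ j, Ex a j x ^ m j = ebeta (expv a m) x := by
  unfold Ex ebeta expv
  rw [Finset.prod_congr rfl fun j (_ : j ∈ univ) =>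
    ((Real.exp_nat_mul (∑ i, a j i * x i) (m j)).symm :
      Real.exp (∑ i, a j i * x i) ^ m j = Real.exp ((m j : ℝ) * ∑ i, a j i * x i))]
  rw [← Real.exp_sum]
  congr 1
  simp_rw [Finset.mul_sum, Finset.sum_mul]
  rw [Finset.sum_comm]
  exact Finset.sum_congr rfl fun i _ => Finset.sum_congr rfl fun j _ => by ring

end SageAux

namespace SageAux
open Finset

lemma expv_mem (a : Fin L → Fin n → ℝ) {q : ℕ} {m : Fin L → ℕ} (hm : m ∈ T L (q + 1)) :
    expv a m ∈ expSet a (q + 1) := by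
  rw [mem_T] at hm
  have hle : ∀ j, m j ≤ q + 1 := by
    intro j
    rw [← hm]
    exact Finset.single_le_sum (f := m) (fun i _ => Nat.zero_le _) (mem_univ j)
  rw [expSet, Finset.mem_image]
  refine ⟨fun j => ⟨m j, by have := hle j; omega⟩, ?_, ?_⟩
  · rw [Finset.mem_filter]
    exact ⟨mem_univ _, by simpa using hm⟩
  · funext i
    simp [expv]

lemma card_T_le (p : ℕ) : ((T L (p+1)).card : ℝ) ≤ ((p:ℝ) + 2) ^ L := by
  have h1 : (T L (p+1)).card ≤ (univ : Finset (Fin L → Fin (p+2))).card := by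
    apply Finset.card_le_card_of_injOn (fun m j => (⟨min (m j) (p+1), by omega⟩ : Fin (p+2)))
    · intro _ _; exact mem_univ _
    · intro m hm m' hm' h
      rw [Finset.mem_coe, mem_T] at hm hm'
      have hb : ∀ j, m j ≤ p + 1 := fun j => by
        rw [← hm]; exact Finset.single_le_sum (f := m) (fun i _ => Nat.zero_le _) (mem_univ j)
      have hb' : ∀ j, m' j ≤ p + 1 := fun j => by
        rw [← hm']; exact Finset.single_le_sum (f := m') (fun i _ => Nat.zero_le _) (mem_univ j)
      funext j
      have := congrFun h j
      simp only [Fin.mk.injEq] at this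
      rwa [min_eq_left (hb j), min_eq_left (hb' j)] at this
  have h2 : (univ : Finset (Fin L → Fin (p+2))).card = (p+2) ^ L := by
    rw [Finset.card_univ]
    simp [Fintype.card_fun]
  calc ((T L (p+1)).card : ℝ) ≤ (((p+2)^L : ℕ) : ℝ) := by exact_mod_cast h1.trans_eq h2
    _ = ((p:ℝ) + 2) ^ L := by push_cast; ring

lemma card_E_le (a : Fin L → Fin n → ℝ) (p : ℕ) :
    ((expSet a (p+1)).card : ℝ) ≤ ((p:ℝ) + 2) ^ L := by
  have h1 : (expSet a (p+1)).card ≤ (univ : Finset (Fin L → Fin (p+2))).card :=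
    (Finset.card_image_le).trans (Finset.card_le_card (Finset.filter_subset _ _))
  have h2 : (univ : Finset (Fin L → Fin (p+2))).card = (p+2) ^ L := by
    rw [Finset.card_univ]; simp [Fintype.card_fun]
  calc ((expSet a (p+1)).card : ℝ) ≤ (((p+2)^L : ℕ) : ℝ) := by exact_mod_cast h1.trans_eq h2
    _ = ((p:ℝ) + 2) ^ L := by push_cast; ring

end SageAux

namespace SageAux
open Finset


lemma div_sum_mul {γ : Type*} (S : Finset γ) (f : γ → ℝ) (c e : ℝ) :
    ((∑ m ∈ S, f m)/c) * e = (∑ m ∈ S, f m * e)/c := by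
  calc ((∑ m ∈ S, f m)/c) * e = ((∑ m ∈ S, f m) * e)/c := by ring
    _ = (∑ m ∈ S, f m * e)/c := by rw [Finset.sum_mul]

lemma neg_div_sum_mul {γ : Type*} (S : Finset γ) (f : γ → ℝ) (c e : ℝ) :
    -(((∑ m ∈ S, f m)/c) * e) = (∑ m ∈ S, -(f m * e))/c := by
  calc -(((∑ m ∈ S, f m)/c) * e) = -((∑ m ∈ S, f m) * e)/c := by ring
    _ = -(∑ m ∈ S, f m * e)/c := by rw [Finset.sum_mul]
    _ = (∑ m ∈ S, -(f m * e))/c := by rw [Finset.sum_neg_distrib]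

set_option maxHeartbeats 4000000 in
theorem main_sage {L n : ℕ} (a : Fin L → Fin n → ℝ) (c' : Fin L → ℝ)
    (X : Set (Fin n → ℝ)) (hXne : X.Nonempty) (hXc : IsCompact X)
    (F : (Fin n → ℝ) → ℝ)
    (hF : ∀ x, F x = ∑ j, c' j * Ex a j x)
    (hpos : ∀ x ∈ X, 0 < F x) :
    ∃ p : ℕ, IsSAGE X (expSet a (p + 1))
      (fun x => (∑ j, Ex a j x) ^ p * F x) := by
  classical
  have hL : 0 < L := by
    obtain ⟨x, hx⟩ := hXne
    have h := hpos x hx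
    rw [hF] at h
    rcases Nat.eq_zero_or_pos L with h0 | h1
    · subst h0; simp at h
    · exact h1
  have hexcont : ∀ j, Continuous (fun x : Fin n → ℝ => Ex a j x) := by
    intro j; unfold Ex; fun_prop
  have hcont : Continuous F := by
    have hFe : F = fun x => ∑ j, c' j * Ex a j x := funext hF
    rw [hFe]; exact continuous_finset_sum _ fun j _ => continuous_const.mul (hexcont j)
  have hMcont : Continuous (fun x => ∑ j, Ex a j x) :=
    continuous_finset_sum _ fun j _ => hexcont j
  obtain ⟨x₀, hx₀X, hx₀⟩ := hXc.exists_isMinOn hXne hcont.continuousOn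
  obtain ⟨x₁, hx₁X, hx₁⟩ := hXc.exists_isMaxOn hXne hMcont.continuousOn
  set ε : ℝ := F x₀ with hεdef
  have hε : 0 < ε := hpos x₀ hx₀X
  have hεle : ∀ x ∈ X, ε ≤ F x := fun x hx => isMinOn_iff.mp hx₀ x hx
  set Mb : ℝ := ∑ j, Ex a j x₁ with hMbdef
  have hMle : ∀ x ∈ X, (∑ j, Ex a j x) ≤ Mb := fun x hx => isMaxOn_iff.mp hx₁ x hx
  have hMpos : ∀ x : Fin n → ℝ, 0 < ∑ j, Ex a j x := fun x =>
    Finset.sum_pos (fun j _ => Ex_pos a j x)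
      (Finset.univ_nonempty_iff.mpr (Fin.pos_iff_nonempty.mp hL))
  have hMbpos : 0 < Mb := hMpos x₁
  set B : ℝ := 1 + ∑ j, |c' j| with hBdef
  have hB1 : 1 ≤ B := by
    have h0 : 0 ≤ ∑ j, |c' j| := Finset.sum_nonneg fun j _ => abs_nonneg _
    rw [hBdef]; linarith
  have hBc : ∀ j, |c' j| ≤ B := by
    intro j
    have h1 : |c' j| ≤ ∑ i, |c' i| :=
      Finset.single_le_sum (fun i _ => abs_nonneg (c' i)) (mem_univ j)
    rw [hBdef]; linarith
  set ε' : ℝ := ε / Mb with hε'def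
  have hε'pos : 0 < ε' := div_pos hε hMbpos
  have hε'B : ε' ≤ B := by
    have h2 : F x₀ ≤ ∑ j, |c' j| * Ex a j x₀ := by
      rw [hF]
      exact Finset.sum_le_sum fun j _ =>
        mul_le_mul_of_nonneg_right (le_abs_self _) (Ex_pos a j x₀).le
    have h3 : ∀ j, Ex a j x₀ ≤ Mb := fun j =>
      le_trans (Finset.single_le_sum (fun i (_ : i ∈ univ) => (Ex_pos a i x₀).le) (mem_univ j))
        (hMle x₀ hx₀X)
    have h4 : ∑ j, |c' j| * Ex a j x₀ ≤ ∑ j, |c' j| * Mb :=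
      Finset.sum_le_sum fun j _ => mul_le_mul_of_nonneg_left (h3 j) (abs_nonneg _)
    have h5 : ∑ j, |c' j| * Mb = (∑ j, |c' j|) * Mb := (Finset.sum_mul _ _ _).symm
    have h6 : ε ≤ B * Mb := by
      have h0 : 0 ≤ ∑ j, |c' j| := Finset.sum_nonneg fun j _ => abs_nonneg _
      have : ε ≤ (∑ j, |c' j|) * Mb := by rw [hεdef]; linarith
      nlinarith
    rw [hε'def, div_le_iff₀ hMbpos]
    linarith
  set s : ℝ := ε' / (2 * B^2) with hsdef
  have hB2pos : (0:ℝ) < 2 * B^2 := by nlinarith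
  have hspos : 0 < s := div_pos hε'pos hB2pos
  have hsB : s * B ≤ 1/2 := by
    rw [hsdef, div_mul_eq_mul_div, div_le_iff₀ hB2pos]
    nlinarith
  have hsB2 : s * B^2 = ε' / 2 := by
    rw [hsdef]; field_simp
  set ρ : ℝ := 1 - s * ε' + s^2 * B^2 with hρdef
  have hρlt : ρ < 1 := by
    rw [hρdef]
    have h1 : s^2 * B^2 = s * (s * B^2) := by ring
    rw [h1, hsB2]
    nlinarith [mul_pos hspos hε'pos]
  have hρpos : 0 < ρ := by
    rw [hρdef]
    have h1 : s * ε' ≤ s * B := by nlinarith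
    nlinarith [sq_nonneg (s * B), hsB]
  have hε'M : ∀ x ∈ X, ε' * (∑ j, Ex a j x) ≤ ε := by
    intro x hx
    calc ε' * (∑ j, Ex a j x) ≤ ε' * Mb := mul_le_mul_of_nonneg_left (hMle x hx) hε'pos.le
      _ = ε := by rw [hε'def]; field_simp
  have hQM : ∀ x ∈ X, (∑ j, Ex a j x * Real.exp (-(s * c' j))) ≤ ρ * ∑ j, Ex a j x := by
    intro x hx
    have h1 : ∀ j : Fin L, Ex a j x * Real.exp (-(s * c' j))
        ≤ Ex a j x * (1 - s * c' j + (s * c' j)^2) := by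
      intro j
      apply mul_le_mul_of_nonneg_left _ (Ex_pos a j x).le
      have habs : |(-(s * c' j))| ≤ 1 := by
        rw [abs_neg, abs_mul, abs_of_pos hspos]
        calc s * |c' j| ≤ s * B := mul_le_mul_of_nonneg_left (hBc j) hspos.le
          _ ≤ 1/2 := hsB
          _ ≤ 1 := by norm_num
      calc Real.exp (-(s * c' j)) ≤ 1 + (-(s * c' j)) + (-(s * c' j))^2 := exp_le_quad habs
        _ = 1 - s * c' j + (s * c' j)^2 := by ring
    have h2 : (∑ j, Ex a j x * Real.exp (-(s * c' j)))
        ≤ ∑ j, Ex a j x * (1 - s * c' j + (s * c' j)^2) :=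
      Finset.sum_le_sum fun j _ => h1 j
    have h3 : ∑ j, Ex a j x * (1 - s * c' j + (s * c' j)^2)
        = (∑ j, Ex a j x) - s * F x + s^2 * ∑ j, c' j ^ 2 * Ex a j x := by
      rw [hF, Finset.mul_sum, Finset.mul_sum, ← Finset.sum_sub_distrib, ← Finset.sum_add_distrib]
      exact Finset.sum_congr rfl fun j _ => by ring
    have h4 : ∑ j, c' j ^ 2 * Ex a j x ≤ B^2 * ∑ j, Ex a j x := by
      rw [Finset.mul_sum]
      apply Finset.sum_le_sum
      intro j _
      apply mul_le_mul_of_nonneg_right _ (Ex_pos a j x).le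
      calc c' j ^ 2 = |c' j|^2 := (sq_abs _).symm
        _ ≤ B^2 := by nlinarith [hBc j, abs_nonneg (c' j)]
    have h5 := hε'M x hx
    have h6 := hεle x hx
    have h7 := hMpos x
    rw [hρdef]
    nlinarith [mul_le_mul_of_nonneg_left h4 (sq_nonneg s),
      mul_le_mul_of_nonneg_left h5 hspos.le, mul_le_mul_of_nonneg_left h6 hspos.le]
  -- choice of p
  obtain ⟨p, hkey⟩ : ∃ p : ℕ,
      B * (((p:ℝ)+2)^L * ((p:ℝ)+2)^L) * ρ^(p+1) ≤ ε' := by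
    have hnorm : ‖ρ‖ < 1 := by rw [Real.norm_eq_abs, abs_of_pos hρpos]; exact hρlt
    have hsum : Summable (fun q : ℕ => (q:ℝ)^(2*L) * ρ^q) :=
      Summable.of_norm (summable_norm_pow_mul_geometric_of_norm_lt_one (2*L) hnorm)
    have htend := hsum.tendsto_atTop_zero
    have hBpos : (0:ℝ) < B := by linarith
    have hδpos : (0:ℝ) < ε' * ρ / B := by positivity
    have hlim : ∀ᶠ q : ℕ in Filter.atTop, ((q:ℕ):ℝ)^(2*L) * ρ^q < ε' * ρ / B :=
      htend.eventually (gt_mem_nhds hδpos)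
    obtain ⟨q₀, hq₀⟩ := Filter.eventually_atTop.mp hlim
    refine ⟨q₀, ?_⟩
    have h := hq₀ (q₀ + 2) (by omega)
    have hcast : ((q₀ + 2 : ℕ) : ℝ) = (q₀:ℝ) + 2 := by push_cast; ring
    rw [hcast] at h
    have hx2 : ((q₀:ℝ)+2)^(2*L) = ((q₀:ℝ)+2)^L * ((q₀:ℝ)+2)^L := by
      rw [two_mul, pow_add]
    have hρp : ρ^(q₀+2) = ρ^(q₀+1) * ρ := by rw [pow_succ]
    rw [hx2, hρp] at h
    have h4 : B * (((q₀:ℝ)+2)^L * ((q₀:ℝ)+2)^L) * ρ^(q₀+1) * ρ < ε' * ρ := by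
      calc B * (((q₀:ℝ)+2)^L * ((q₀:ℝ)+2)^L) * ρ^(q₀+1) * ρ
          = B * (((q₀:ℝ)+2)^L * ((q₀:ℝ)+2)^L * (ρ^(q₀+1) * ρ)) := by ring
        _ < B * (ε' * ρ / B) := by
            apply mul_lt_mul_of_pos_left h hBpos
        _ = ε' * ρ := by field_simp
    nlinarith [h4, hρpos]
  refine ⟨p, ?_⟩
  have hp1 : ((p:ℝ)+1) ≠ 0 := by positivity
  have hp1pos : (0:ℝ) < (p:ℝ)+1 := by positivity
  obtain ⟨Efin, hEdef⟩ : ∃ E : Finset (Fin n → ℝ), E = expSet a (p+1) := ⟨_, rfl⟩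
  rw [← hEdef]
  obtain ⟨D, hDdef⟩ : ∃ D : (Fin n → ℝ) → ℝ,
      D = fun β => (∑ m ∈ (T L (p+1)).filter (fun m => expv a m = β), C c' m) / ((p:ℝ)+1) :=
    ⟨_, rfl⟩
  obtain ⟨Dp, hDpdef⟩ : ∃ Dp : (Fin n → ℝ) → ℝ, Dp = fun β => max (D β) 0 := ⟨_, rfl⟩
  obtain ⟨P, hPdef⟩ : ∃ P : (Fin n → ℝ) → ℝ, P = fun x => ∑ β ∈ Efin, Dp β * ebeta β x :=
    ⟨_, rfl⟩
  obtain ⟨N, hNdef⟩ : ∃ N : ℕ, N = (T L (p+1)).card := ⟨_, rfl⟩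
  obtain ⟨t, htdef⟩ : ∃ t : ℝ, t = (N:ℝ) * B * ρ^(p+1) / ε' := ⟨_, rfl⟩
  -- representation
  have h_repr : ∀ x, (∑ j, Ex a j x)^p * F x = ∑ β ∈ Efin, D β * ebeta β x := by
    intro x
    have h1 : ∑ β ∈ Efin, ∑ m ∈ (T L (p+1)).filter (fun m => expv a m = β),
          C c' m * ebeta (expv a m) x
        = ∑ m ∈ T L (p+1), C c' m * ebeta (expv a m) x := by
      rw [hEdef]
      exact Finset.sum_fiberwise_of_maps_to (fun m hm => expv_mem a hm) _
    have h2 : ∑ m ∈ T L (p+1), C c' m * ebeta (expv a m) x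
        = ((p:ℝ)+1) * (F x * (∑ j, Ex a j x)^p) := by
      have h3 : ∀ m ∈ T L (p+1), C c' m * ebeta (expv a m) x
          = C c' m * ∏ j, Ex a j x ^ m j := by
        intro m _; rw [prod_Ex_pow]
      rw [Finset.sum_congr rfl h3, expansion p c' (fun j => Ex a j x), hF]
    have h4 : ∀ β ∈ Efin, D β * ebeta β x
        = (∑ m ∈ (T L (p+1)).filter (fun m => expv a m = β),
            C c' m * ebeta (expv a m) x) / ((p:ℝ)+1) := by
      intro β _
      simp only [hDdef]
      rw [div_sum_mul]
      congr 1
      apply Finset.sum_congr rfl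
      intro m hm
      rw [(Finset.mem_filter.mp hm).2]
    rw [Finset.sum_congr rfl h4, ← Finset.sum_div, h1, h2]
    field_simp
  -- Chernoff bound
  have h_chern : ∀ m ∈ T L (p+1), (∑ j, c' j * (m j:ℝ)) < 0 → ∀ x ∈ X,
      (Nat.multinomial univ m : ℝ) * ∏ j, Ex a j x ^ m j
        ≤ (ρ * ∑ j, Ex a j x)^(p+1) := by
    intro m hm hneg x hx
    have hQ0 : (0:ℝ) ≤ ∑ j, Ex a j x * Real.exp (-(s * c' j)) :=
      Finset.sum_nonneg fun j _ => mul_nonneg (Ex_pos a j x).le (Real.exp_pos _).le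
    have hQpow : (∑ j, Ex a j x * Real.exp (-(s * c' j)))^(p+1)
        = ∑ m' ∈ T L (p+1), (Nat.multinomial univ m' : ℝ) *
            ∏ j, (Ex a j x * Real.exp (-(s * c' j))) ^ m' j :=
      Finset.sum_pow_eq_sum_piAntidiag univ _ (p+1)
    have hterm : (Nat.multinomial univ m : ℝ) * ∏ j, (Ex a j x * Real.exp (-(s * c' j))) ^ m j
        ≤ (∑ j, Ex a j x * Real.exp (-(s * c' j)))^(p+1) := by
      rw [hQpow]
      apply Finset.single_le_sum
        (f := fun m' => (Nat.multinomial univ m' : ℝ) *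
          ∏ j, (Ex a j x * Real.exp (-(s * c' j))) ^ m' j) _ hm
      intro m' _
      exact mul_nonneg (Nat.cast_nonneg _) (Finset.prod_nonneg fun j _ =>
        pow_nonneg (mul_nonneg (Ex_pos a j x).le (Real.exp_pos _).le) _)
    have hsplit : ∏ j, (Ex a j x * Real.exp (-(s * c' j))) ^ m j
        = (∏ j, Ex a j x ^ m j) * Real.exp (-(s * ∑ j, c' j * (m j:ℝ))) := by
      simp_rw [mul_pow]
      rw [Finset.prod_mul_distrib]
      congr 1
      rw [Finset.prod_congr rfl fun j (_ : j ∈ univ) =>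
        ((Real.exp_nat_mul (-(s * c' j)) (m j)).symm :
          Real.exp (-(s * c' j)) ^ m j = Real.exp ((m j : ℝ) * -(s * c' j)))]
      rw [← Real.exp_sum]
      congr 1
      rw [Finset.mul_sum, ← Finset.sum_neg_distrib]
      exact Finset.sum_congr rfl fun j _ => by ring
    have hone : (1:ℝ) ≤ Real.exp (-(s * ∑ j, c' j * (m j:ℝ))) :=
      Real.one_le_exp (by nlinarith)
    have hfin : (Nat.multinomial univ m : ℝ) * ∏ j, Ex a j x ^ m j
        ≤ (Nat.multinomial univ m : ℝ) * ∏ j, (Ex a j x * Real.exp (-(s * c' j))) ^ m j := by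
      rw [hsplit]
      have h0 : (0:ℝ) ≤ (Nat.multinomial univ m : ℝ) * ∏ j, Ex a j x ^ m j :=
        mul_nonneg (Nat.cast_nonneg _) (Finset.prod_nonneg fun j _ =>
          pow_nonneg (Ex_pos a j x).le _)
      nlinarith
    calc (Nat.multinomial univ m : ℝ) * ∏ j, Ex a j x ^ m j
        ≤ (∑ j, Ex a j x * Real.exp (-(s * c' j)))^(p+1) := hfin.trans hterm
      _ ≤ (ρ * ∑ j, Ex a j x)^(p+1) := pow_le_pow_left₀ hQ0 (hQM x hx) (p+1)
  -- bound on negative terms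
  have hCneg : ∀ m ∈ T L (p+1), ∀ x ∈ X,
      -(C c' m * ebeta (expv a m) x) ≤ B * ((p:ℝ)+1) * (ρ * ∑ j, Ex a j x)^(p+1) := by
    intro m hm x hx
    have hρM : (0:ℝ) ≤ (ρ * ∑ j, Ex a j x)^(p+1) :=
      pow_nonneg (mul_nonneg hρpos.le (hMpos x).le) _
    have hBp1 : (0:ℝ) ≤ B * ((p:ℝ)+1) := by nlinarith
    by_cases hC : C c' m < 0
    · have hmult : (0:ℝ) < (Nat.multinomial univ m : ℝ) := by
        exact_mod_cast Nat.multinomial_pos univ m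
      have hμ : (∑ j, c' j * (m j:ℝ)) < 0 := by
        rw [C] at hC
        by_contra hcon
        push_neg at hcon
        nlinarith
      have hch := h_chern m hm hμ x hx
      have hμb : -(∑ j, c' j * (m j:ℝ)) ≤ B * ((p:ℝ)+1) := by
        have h1 : |∑ j, c' j * (m j:ℝ)| ≤ ∑ j, |c' j| * (m j:ℝ) := by
          refine (Finset.abs_sum_le_sum_abs _ _).trans ?_
          apply le_of_eq
          apply Finset.sum_congr rfl
          intro j _
          rw [abs_mul, Nat.abs_cast]
        have h2 : ∑ j, |c' j| * (m j:ℝ) ≤ ∑ j, B * (m j:ℝ) :=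
          Finset.sum_le_sum fun j _ => mul_le_mul_of_nonneg_right (hBc j) (Nat.cast_nonneg _)
        have h3 : ∑ j, B * (m j:ℝ) = B * ((p:ℝ)+1) := by
          rw [← Finset.mul_sum]
          congr 1
          rw [mem_T] at hm
          exact_mod_cast congrArg (fun t : ℕ => (t:ℝ)) hm
        have := neg_abs_le (∑ j, c' j * (m j:ℝ))
        linarith [abs_le.mp (le_refl |∑ j, c' j * (m j:ℝ)|)]
      rw [← prod_Ex_pow]
      have heq : -(C c' m * ∏ j, Ex a j x ^ m j)
          = (-(∑ j, c' j * (m j:ℝ))) * ((Nat.multinomial univ m:ℝ) * ∏ j, Ex a j x ^ m j) := by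
        rw [C]; ring
      rw [heq]
      have hprodnn : (0:ℝ) ≤ (Nat.multinomial univ m:ℝ) * ∏ j, Ex a j x ^ m j :=
        mul_nonneg (Nat.cast_nonneg _) (Finset.prod_nonneg fun j _ =>
          pow_nonneg (Ex_pos a j x).le _)
      calc (-(∑ j, c' j * (m j:ℝ))) * ((Nat.multinomial univ m:ℝ) * ∏ j, Ex a j x ^ m j)
          ≤ (B * ((p:ℝ)+1)) * ((Nat.multinomial univ m:ℝ) * ∏ j, Ex a j x ^ m j) :=
            mul_le_mul_of_nonneg_right hμb hprodnn
        _ ≤ (B * ((p:ℝ)+1)) * (ρ * ∑ j, Ex a j x)^(p+1) :=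
            mul_le_mul_of_nonneg_left hch hBp1
    · push_neg at hC
      have h0 : 0 ≤ C c' m * ebeta (expv a m) x := mul_nonneg hC (ebeta_pos _ _).le
      nlinarith [mul_nonneg hBp1 hρM]
  -- bound for negative fiber coefficients
  have h_negD : ∀ β ∈ Efin, ∀ x ∈ X,
      -(D β * ebeta β x) ≤ (N:ℝ) * B * ρ^(p+1) * (∑ j, Ex a j x)^(p+1) := by
    intro β hβ x hx
    have h1 : -(D β * ebeta β x)
        = (∑ m ∈ (T L (p+1)).filter (fun m => expv a m = β),
            -(C c' m * ebeta (expv a m) x)) / ((p:ℝ)+1) := by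
      simp only [hDdef]
      rw [neg_div_sum_mul]
      congr 1
      apply Finset.sum_congr rfl
      intro m hm
      rw [(Finset.mem_filter.mp hm).2]
    have h2 : ∑ m ∈ (T L (p+1)).filter (fun m => expv a m = β),
          -(C c' m * ebeta (expv a m) x)
        ≤ ((T L (p+1)).filter (fun m => expv a m = β)).card •
            (B * ((p:ℝ)+1) * (ρ * ∑ j, Ex a j x)^(p+1)) :=
      Finset.sum_le_card_nsmul _ _ _ fun m hm => hCneg m (Finset.mem_filter.mp hm).1 x hx
    have hcard : (((T L (p+1)).filter (fun m => expv a m = β)).card : ℝ) ≤ (N:ℝ) := by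
      rw [hNdef]
      exact_mod_cast Finset.card_le_card (Finset.filter_subset _ _)
    have h3 : ((T L (p+1)).filter (fun m => expv a m = β)).card •
          (B * ((p:ℝ)+1) * (ρ * ∑ j, Ex a j x)^(p+1))
        ≤ (N:ℝ) * (B * ((p:ℝ)+1) * (ρ * ∑ j, Ex a j x)^(p+1)) := by
      rw [nsmul_eq_mul]
      apply mul_le_mul_of_nonneg_right hcard
      have hρM : (0:ℝ) ≤ (ρ * ∑ j, Ex a j x)^(p+1) :=
        pow_nonneg (mul_nonneg hρpos.le (hMpos x).le) _
      have hBp1 : (0:ℝ) ≤ B * ((p:ℝ)+1) := by nlinarith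
      exact mul_nonneg hBp1 hρM
    rw [h1]
    rw [div_le_iff₀ hp1pos]
    calc (∑ m ∈ (T L (p+1)).filter (fun m => expv a m = β), -(C c' m * ebeta (expv a m) x))
        ≤ (N:ℝ) * (B * ((p:ℝ)+1) * (ρ * ∑ j, Ex a j x)^(p+1)) := le_trans h2 h3
      _ = (N:ℝ) * B * ρ^(p+1) * (∑ j, Ex a j x)^(p+1) * ((p:ℝ)+1) := by
          rw [mul_pow]; ring
  -- lower bounds for P
  have hPge : ∀ x, (∑ j, Ex a j x)^p * F x ≤ P x := by
    intro x
    rw [h_repr x]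
    simp only [hPdef, hDpdef]
    apply Finset.sum_le_sum
    intro β _
    exact mul_le_mul_of_nonneg_right (le_max_left _ _) (ebeta_pos β x).le
  have hPlb : ∀ x ∈ X, ε' * (∑ j, Ex a j x)^(p+1) ≤ P x := by
    intro x hx
    have hMp : (0:ℝ) ≤ (∑ j, Ex a j x)^p := pow_nonneg (hMpos x).le p
    calc ε' * (∑ j, Ex a j x)^(p+1) = (ε' * ∑ j, Ex a j x) * (∑ j, Ex a j x)^p := by
          rw [pow_succ]; ring
      _ ≤ ε * (∑ j, Ex a j x)^p := mul_le_mul_of_nonneg_right (hε'M x hx) hMp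
      _ ≤ F x * (∑ j, Ex a j x)^p := mul_le_mul_of_nonneg_right (hεle x hx) hMp
      _ = (∑ j, Ex a j x)^p * F x := by ring
      _ ≤ P x := hPge x
  have hPnn : ∀ x, 0 ≤ P x := by
    intro x
    simp only [hPdef, hDpdef]
    exact Finset.sum_nonneg fun β _ => mul_nonneg (le_max_right _ _) (ebeta_pos β x).le
  have ht0 : 0 ≤ t := by
    rw [htdef]
    exact div_nonneg (mul_nonneg (mul_nonneg (Nat.cast_nonneg _) (by linarith : (0:ℝ) ≤ B))
      (pow_nonneg hρpos.le _)) hε'pos.le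
  have htε' : t * ε' = (N:ℝ) * B * ρ^(p+1) := by
    rw [htdef]; field_simp
  have hpieceNN : ∀ β ∈ Efin, ∀ x ∈ X, 0 ≤ D β * ebeta β x + t * P x := by
    intro β hβ x hx
    have h1 := h_negD β hβ x hx
    have h2 : t * (ε' * (∑ j, Ex a j x)^(p+1)) ≤ t * P x :=
      mul_le_mul_of_nonneg_left (hPlb x hx) ht0
    have h3 : t * (ε' * (∑ j, Ex a j x)^(p+1))
        = (N:ℝ) * B * ρ^(p+1) * (∑ j, Ex a j x)^(p+1) := by
      rw [show t * (ε' * (∑ j, Ex a j x)^(p+1)) = (t * ε') * (∑ j, Ex a j x)^(p+1) from by ring,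
        htε']
    linarith
  have hEt : (Efin.card : ℝ) * t ≤ 1 := by
    have hNle : ((N:ℕ):ℝ) ≤ ((p:ℝ)+2)^L := by rw [hNdef]; exact card_T_le p
    have hEle : ((Efin.card:ℕ):ℝ) ≤ ((p:ℝ)+2)^L := by rw [hEdef]; exact card_E_le a p
    have hZnn : (0:ℝ) ≤ ((p:ℝ)+2)^L := by positivity
    have hρp : (0:ℝ) ≤ ρ^(p+1) := pow_nonneg hρpos.le _
    have hBnn : (0:ℝ) ≤ B := by linarith
    have hEN : (Efin.card:ℝ) * (N:ℝ) ≤ ((p:ℝ)+2)^L * ((p:ℝ)+2)^L :=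
      mul_le_mul hEle hNle (Nat.cast_nonneg _) hZnn
    have h4 : (Efin.card:ℝ) * ((N:ℝ) * B * ρ^(p+1)) ≤ ε' := by
      nlinarith [mul_le_mul_of_nonneg_right hEN (mul_nonneg hBnn hρp)]
    calc (Efin.card : ℝ) * t = (Efin.card:ℝ) * ((N:ℝ) * B * ρ^(p+1)) / ε' := by
          rw [htdef]; ring
      _ ≤ ε' / ε' := (div_le_div_iff_of_pos_right hε'pos).mpr h4
      _ = 1 := div_self hε'pos.ne'
  obtain ⟨Eneg, hEnegdef⟩ : ∃ En : Finset (Fin n → ℝ), En = Efin.filter (fun β => D β < 0) :=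
    ⟨_, rfl⟩
  have hEnegle : (Eneg.card : ℝ) ≤ (Efin.card : ℝ) := by
    rw [hEnegdef]
    exact_mod_cast Finset.card_le_card (Finset.filter_subset _ _)
  have hremnn : 0 ≤ 1 - (Eneg.card:ℝ) * t := by
    linarith [mul_le_mul_of_nonneg_right hEnegle ht0, hEt]
  obtain ⟨piece, hpiecedef⟩ : ∃ pc : (Fin n → ℝ) → (Fin n → ℝ) → ℝ,
      pc = fun β => if D β < 0 then (fun x => D β * ebeta β x + t * P x) else (fun _ => 0) :=
    ⟨_, rfl⟩
  have hpiece_neg : ∀ β, D β < 0 → piece β = fun x => D β * ebeta β x + t * P x := by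
    intro β h; rw [hpiecedef]; simp [h]
  have hpiece_pos : ∀ β, ¬ D β < 0 → piece β = fun _ => 0 := by
    intro β h; rw [hpiecedef]; simp [h]
  have hAGEzero : IsAGE X Efin (fun _ => 0) := by
    refine ⟨⟨fun _ => 0, ?_, 0, ?_⟩, ?_⟩
    · intro x; simp
    · intro α _ _; exact le_refl 0
    · intro x _; exact le_refl 0
  have hAGEpiece : ∀ β ∈ Efin, IsAGE X Efin (piece β) := by
    intro β hβ
    by_cases hDβ : D β < 0
    · rw [hpiece_neg β hDβ]
      refine ⟨⟨fun α => if α = β then D β else t * Dp α, ?_, β, ?_⟩, ?_⟩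
      · intro x
        show D β * ebeta β x + t * P x
            = ∑ α ∈ Efin, (if α = β then D β else t * Dp α) * ebeta α x
        rw [← Finset.add_sum_erase _ (fun α => (if α = β then D β else t * Dp α) * ebeta α x) hβ]
        rw [if_pos rfl]
        congr 1
        have hers : ∑ α ∈ Efin.erase β, (if α = β then D β else t * Dp α) * ebeta α x
            = ∑ α ∈ Efin.erase β, (t * Dp α) * ebeta α x :=
          Finset.sum_congr rfl fun α hα => by rw [if_neg (Finset.ne_of_mem_erase hα)]
        rw [hers]
        have hDpβ : Dp β = 0 := by simp only [hDpdef]; exact max_eq_right hDβ.le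
        have hPx : P x = ∑ α ∈ Efin, Dp α * ebeta α x := by rw [hPdef]
        rw [hPx]
        rw [← Finset.add_sum_erase _ (fun α => Dp α * ebeta α x) hβ, hDpβ, zero_mul, zero_add,
          Finset.mul_sum]
        exact Finset.sum_congr rfl fun α _ => by ring
      · intro α _ hne
        show 0 ≤ if α = β then D β else t * Dp α
        rw [if_neg hne]
        have : 0 ≤ Dp α := by simp only [hDpdef]; exact le_max_right _ _
        exact mul_nonneg ht0 this
      · intro x hx; exact hpieceNN β hβ x hx
    · rw [hpiece_pos β hDβ]; exact hAGEzero
  have hAGErem : IsAGE X Efin (fun x => (1 - (Eneg.card:ℝ) * t) * P x) := by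
    refine ⟨⟨fun α => (1 - (Eneg.card:ℝ) * t) * Dp α, ?_, 0, ?_⟩, ?_⟩
    · intro x
      show (1 - (Eneg.card:ℝ) * t) * P x
          = ∑ α ∈ Efin, ((1 - (Eneg.card:ℝ) * t) * Dp α) * ebeta α x
      have hPx : P x = ∑ α ∈ Efin, Dp α * ebeta α x := by rw [hPdef]
      rw [hPx, Finset.mul_sum]
      exact Finset.sum_congr rfl fun α _ => by ring
    · intro α _ _
      show 0 ≤ (1 - (Eneg.card:ℝ) * t) * Dp α
      have : 0 ≤ Dp α := by simp only [hDpdef]; exact le_max_right _ _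
      exact mul_nonneg hremnn this
    · intro x _
      exact mul_nonneg hremnn (hPnn x)
  refine ⟨Efin.card + 1,
    Fin.snoc (fun i => piece ((Efin.equivFin.symm i : {y // y ∈ Efin}) : Fin n → ℝ))
      (fun x => (1 - (Eneg.card:ℝ) * t) * P x), ?_, ?_⟩
  · intro j
    refine Fin.lastCases ?_ ?_ j
    · rw [Fin.snoc_last]; exact hAGErem
    · intro i; rw [Fin.snoc_castSucc]
      exact hAGEpiece _ (Finset.coe_mem _)
  · intro x
    change (∑ j, Ex a j x)^p * F x = _
    rw [Fin.sum_univ_castSucc]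
    simp only [Fin.snoc_castSucc, Fin.snoc_last]
    have e1 : ∑ i : Fin Efin.card,
          piece ((Efin.equivFin.symm i : {y // y ∈ Efin}) : Fin n → ℝ) x
        = ∑ β ∈ Efin, piece β x := by
      rw [← Finset.sum_coe_sort Efin (fun β => piece β x)]
      exact Equiv.sum_comp Efin.equivFin.symm (fun b => piece (b : Fin n → ℝ) x)
    rw [e1]
    have e2 : ∑ β ∈ Efin, piece β x = ∑ β ∈ Eneg, (D β * ebeta β x + t * P x) := by
      rw [hEnegdef, Finset.sum_filter]
      apply Finset.sum_congr rfl
      intro β _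
      by_cases h : D β < 0
      · rw [hpiece_neg β h, if_pos h]
      · rw [hpiece_pos β h, if_neg h]
    rw [e2]
    have e3 : ∑ β ∈ Eneg, (D β * ebeta β x + t * P x)
        = (∑ β ∈ Eneg, D β * ebeta β x) + (Eneg.card:ℝ) * (t * P x) := by
      rw [Finset.sum_add_distrib, Finset.sum_const, nsmul_eq_mul]
    rw [e3]
    have e4 : ∑ β ∈ Eneg, D β * ebeta β x = (∑ β ∈ Efin, D β * ebeta β x) - P x := by
      have hPx : P x = ∑ α ∈ Efin, Dp α * ebeta α x := by rw [hPdef]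
      rw [hEnegdef, Finset.sum_filter, hPx, ← Finset.sum_sub_distrib]
      apply Finset.sum_congr rfl
      intro β _
      by_cases h : D β < 0
      · rw [if_pos h]
        have hz : Dp β = 0 := by simp only [hDpdef]; exact max_eq_right h.le
        rw [hz]; ring
      · rw [if_neg h]
        have hz : Dp β = D β := by simp only [hDpdef]; exact max_eq_left (not_lt.mp h)
        rw [hz]; ring
    rw [e4, ← h_repr x]
    ring

end SageAux

/-- Convergent hierarchy of SAGE lower bounds: for every `λ < f* = inf_X f`,
some modulated power of `f - λ` (with a zero row appended to the exponents)
is `X`-SAGE. -/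
theorem stmt1 {ℓ n : ℕ} (hℓ : 0 < ℓ) (hn : 0 < n)
    (A : Fin ℓ → Fin n → ℝ) (hA : ∀ j i, ∃ q : ℚ, A j i = (q : ℝ))
    (c : Fin ℓ → ℝ) (X : Set (Fin n → ℝ)) (hXne : X.Nonempty)
    (hXcompact : IsCompact X) (hXconvex : Convex ℝ X)
    (lam : ℝ) (hlam : lam < sInf (Sig c A '' X)) :
    ∃ p : ℕ,
      IsSAGE X (expSet (appendZeroRow A) (p + 1))
        (fun x =>
          (∑ j : Fin (ℓ + 1),
              Real.exp (∑ i, appendZeroRow A j i * x i)) ^ p *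
            (Sig c A x - lam)) := by
  classical
  have hcont : Continuous (Sig c A) := by
    unfold Sig
    fun_prop
  have hF : ∀ x, Sig c A x - lam
      = ∑ j : Fin (ℓ+1), (Fin.snoc c (-lam) : Fin (ℓ+1) → ℝ) j *
          SageAux.Ex (appendZeroRow A) j x := by
    intro x
    rw [Fin.sum_univ_castSucc (f := fun j => (Fin.snoc c (-lam) : Fin (ℓ+1) → ℝ) j *
          SageAux.Ex (appendZeroRow A) j x)]
    have h1 : ∀ j : Fin ℓ, (Fin.snoc c (-lam) : Fin (ℓ+1) → ℝ) (Fin.castSucc j) *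
        SageAux.Ex (appendZeroRow A) (Fin.castSucc j) x
        = c j * Real.exp (∑ i, A j i * x i) := by
      intro j
      rw [Fin.snoc_castSucc]
      congr 1
      unfold SageAux.Ex appendZeroRow
      rw [Fin.snoc_castSucc]
    have h2 : (Fin.snoc c (-lam) : Fin (ℓ+1) → ℝ) (Fin.last ℓ) *
        SageAux.Ex (appendZeroRow A) (Fin.last ℓ) x = -lam := by
      rw [Fin.snoc_last]
      have : SageAux.Ex (appendZeroRow A) (Fin.last ℓ) x = 1 := by
        unfold SageAux.Ex appendZeroRow
        rw [Fin.snoc_last]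
        simp
      rw [this, mul_one]
    rw [Finset.sum_congr rfl (fun j _ => h1 j), h2, Sig]
    ring
  have hpos : ∀ x ∈ X, 0 < Sig c A x - lam := by
    intro x hx
    have hbdd : BddBelow (Sig c A '' X) := (hXcompact.image hcont).bddBelow
    have h1 : sInf (Sig c A '' X) ≤ Sig c A x := csInf_le hbdd ⟨x, hx, rfl⟩
    linarith
  obtain ⟨p, hp⟩ := SageAux.main_sage (appendZeroRow A) (Fin.snoc c (-lam)) X hXne hXcompact
    (fun x => Sig c A x - lam) hF hpos
  exact ⟨p, hp⟩
end

section
/- Let X ⊆ ℝⁿ be a nonempty compact convex set, let A ∈ ℝ^{ℓ×n} with rows A_1,…,A_ℓ, let i ∈ {1,…,ℓ}, and let c ∈ ℝ^ℓ satisfy c_j ≥ 0 for all j ≠ i. Then Sig(c,A)(x) ≥ 0 for all x ∈ X if and only if there exist a vector v = (v_j)_{j≠i} with v_j ≥ 0 for all j ≠ i, with v_j = 0 whenever c_j = 0, and a vector λ ∈ ℝⁿ such that σ_X(λ) + ∑_{j≠i} v_j · log(v_j / c_j) − ∑_{j≠i} v_j ≤ c_i and ∑_{j≠i} v_j · (A_j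 − A_i) + λ = 0, where a summand v_j · log(v_j / c_j) is interpreted as 0 when v_j = 0. -/
open scoped BigOperators

/-- The support function `σ_X(λ) = sup_{x ∈ X} λ ⬝ x` of a set `X ⊆ ℝⁿ`. -/
noncomputable def suppFn {n : ℕ} (X : Set (Fin n → ℝ)) (lam : Fin n → ℝ) : ℝ :=
  sSup ((fun x => ∑ k, lam k * x k) '' X)

lemma aux_slope (h : ℝ → ℝ) (D : ℝ) (hd : HasDerivAt h D 0)
    (hm : ∀ t ∈ Set.Icc (0:ℝ) 1, h 0 ≤ h t) : 0 ≤ D := by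
  have h1 : Filter.Tendsto (slope h 0) (nhdsWithin 0 (Set.Ioi 0)) (nhds D) :=
    (hasDerivAt_iff_tendsto_slope.1 hd).mono_left
      (nhdsWithin_mono _ (fun t ht => ne_of_gt ht))
  refine ge_of_tendsto h1 ?_
  filter_upwards [Ioo_mem_nhdsGT_of_mem (by norm_num : (0:ℝ) ∈ Set.Ico 0 1)] with t ht
  have h2 := hm t ⟨le_of_lt ht.1, le_of_lt ht.2⟩
  have : slope h 0 t = (h t - h 0) / t := by simp [slope_def_field, div_eq_div_iff]
  rw [this]
  exact div_nonneg (sub_nonneg.2 h2) ht.1.le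

lemma aux_fy {c v t : ℝ} (hc : 0 ≤ c) (hv : 0 ≤ v) (hcv : c = 0 → v = 0) :
    v * t - v * Real.log (v / c) + v ≤ c * Real.exp t := by
  rcases eq_or_lt_of_le hv with hv0 | hv0
  · simp [← hv0]
    positivity
  · have hc0 : 0 < c := by
      rcases eq_or_lt_of_le hc with h | h
      · exact absurd (hcv h.symm) (ne_of_gt hv0)
      · exact h
    have hvc : 0 < v / c := div_pos hv0 hc0
    have key : (t - Real.log (v / c)) + 1 ≤ Real.exp (t - Real.log (v / c)) :=
      Real.add_one_le_exp _
    have h3 : v * Real.exp (t - Real.log (v / c)) = c * Real.exp t := by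
      rw [Real.exp_sub, Real.exp_log hvc]
      field_simp
    calc v * t - v * Real.log (v / c) + v
        = v * ((t - Real.log (v / c)) + 1) := by ring
      _ ≤ v * Real.exp (t - Real.log (v / c)) := by nlinarith
      _ = c * Real.exp t := h3

lemma aux_deriv {ι : Type*} (S : Finset ι) (c a b : ι → ℝ) :
    HasDerivAt (fun t => ∑ j ∈ S, c j * Real.exp (a j + t * b j))
      (∑ j ∈ S, c j * Real.exp (a j) * b j) 0 := by
  apply HasDerivAt.fun_sum
  intro j _
  have h1 : HasDerivAt (fun t : ℝ => a j + t * b j) (b j) 0 :=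
    (hasDerivAt_mul_const (b j)).const_add (a j)
  have h2 := (h1.exp).const_mul (c j)
  simpa [mul_assoc] using h2

/-- auxiliary signomial with the `i`-th exponent factored out -/
noncomputable def auxF {ℓ n : ℕ} (c : Fin ℓ → ℝ) (A : Fin ℓ → Fin n → ℝ) (i : Fin ℓ) :
    (Fin n → ℝ) → ℝ :=
  fun x => ∑ j ∈ Finset.univ.erase i, c j * Real.exp (∑ k, (A j k - A i k) * x k)

lemma auxF_cont {ℓ n : ℕ} (c : Fin ℓ → ℝ) (A : Fin ℓ → Fin n → ℝ) (i : Fin ℓ) :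
    Continuous (auxF c A i) := by
  apply continuous_finset_sum
  intro j _
  exact continuous_const.mul (Real.continuous_exp.comp
    (continuous_finset_sum _ fun k _ => continuous_const.mul (continuous_apply k)))

lemma Sig_eq {ℓ n : ℕ} (c : Fin ℓ → ℝ) (A : Fin ℓ → Fin n → ℝ) (i : Fin ℓ)
    (x : Fin n → ℝ) :
    Sig c A x = Real.exp (∑ k, A i k * x k) * (c i + auxF c A i x) := by
  unfold Sig auxF
  rw [mul_add, Finset.mul_sum, ← Finset.add_sum_erase _ _ (Finset.mem_univ i)]
  congr 1
  · ring
  · apply Finset.sum_congr rfl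
    intro j _
    have h1 : ∑ k, (A j k - A i k) * x k = (∑ k, A j k * x k) - ∑ k, A i k * x k := by
      rw [← Finset.sum_sub_distrib]
      exact Finset.sum_congr rfl fun k _ => by ring
    rw [h1, Real.exp_sub]
    field_simp

/-- Relative-entropy characterization of the conditional AGE cone
(Theorem 1 / Murray–Chandrasekaran–Wierman).  The summand
`v j * log (v j / c j)` is literally `0` when `v j = 0`. -/
theorem stmt2 {ℓ n : ℕ} (X : Set (Fin n → ℝ)) (hXne : X.Nonempty)
    (hXcompact : IsCompact X) (hXconvex : Convex ℝ X)
    (A : Fin ℓ → Fin n → ℝ) (i : Fin ℓ) (c : Fin ℓ → ℝ)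
    (hc : ∀ j, j ≠ i → 0 ≤ c j) :
    (∀ x ∈ X, 0 ≤ Sig c A x) ↔
      ∃ (v : Fin ℓ → ℝ) (lam : Fin n → ℝ),
        (∀ j, j ≠ i → 0 ≤ v j) ∧
        (∀ j, j ≠ i → c j = 0 → v j = 0) ∧
        suppFn X lam
            + ∑ j ∈ Finset.univ.erase i, v j * Real.log (v j / c j)
            - ∑ j ∈ Finset.univ.erase i, v j ≤ c i ∧
        ∀ k, (∑ j ∈ Finset.univ.erase i, v j * (A j k - A i k)) + lam k = 0 := by
  classical
  have hequiv : ∀ x : Fin n → ℝ, (0 ≤ Sig c A x ↔ 0 ≤ c i + auxF c A i x) := by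
    intro x
    rw [Sig_eq c A i x]
    exact mul_nonneg_iff_of_pos_left (Real.exp_pos _)
  -- generic swap lemma
  have hswap : ∀ (v : Fin ℓ → ℝ) (lam : Fin n → ℝ),
      (∀ k, lam k = -∑ j ∈ Finset.univ.erase i, v j * (A j k - A i k)) →
      ∀ y : Fin n → ℝ, ∑ k, lam k * y k
        = -∑ j ∈ Finset.univ.erase i, v j * (∑ k, (A j k - A i k) * y k) := by
    intro v lam hlam y
    calc ∑ k, lam k * y k
        = -∑ k, ∑ j ∈ Finset.univ.erase i, v j * (A j k - A i k) * y k := by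
          rw [← Finset.sum_neg_distrib]
          apply Finset.sum_congr rfl
          intro k _
          rw [hlam k, neg_mul, Finset.sum_mul]
      _ = -∑ j ∈ Finset.univ.erase i, v j * (∑ k, (A j k - A i k) * y k) := by
          rw [Finset.sum_comm]
          congr 1
          apply Finset.sum_congr rfl
          intro j _
          rw [Finset.mul_sum]
          exact Finset.sum_congr rfl fun k _ => by ring
  constructor
  · -- forward
    intro hpos
    obtain ⟨xs, hxsX, hmin⟩ := hXcompact.exists_isMinOn hXne (auxF_cont c A i).continuousOn
    set v : Fin ℓ → ℝ := fun j => c j * Real.exp (∑ k, (A j k - A i k) * xs k) with hv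
    set lam : Fin n → ℝ := fun k => -∑ j ∈ Finset.univ.erase i, v j * (A j k - A i k) with hlam
    have hlam' : ∀ k, lam k = -∑ j ∈ Finset.univ.erase i, v j * (A j k - A i k) :=
      fun k => rfl
    refine ⟨v, lam, ?_, ?_, ?_, ?_⟩
    · intro j hj
      exact mul_nonneg (hc j hj) (Real.exp_pos _).le
    · intro j hj hcj
      simp [hv, hcj]
    · -- main inequality
      have hlog : ∑ j ∈ Finset.univ.erase i, v j * Real.log (v j / c j)
          = ∑ j ∈ Finset.univ.erase i, v j * (∑ k, (A j k - A i k) * xs k) := by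
        apply Finset.sum_congr rfl
        intro j hj
        have hj' : j ≠ i := Finset.ne_of_mem_erase hj
        rcases (hc j hj').eq_or_lt with hcj | hcj
        · simp [hv, ← hcj]
        · have : v j / c j = Real.exp (∑ k, (A j k - A i k) * xs k) := by
            rw [hv]
            field_simp
          rw [this, Real.log_exp]
      have hsum_v : ∑ j ∈ Finset.univ.erase i, v j = auxF c A i xs := rfl
      have hdot := hswap v lam hlam' xs
      have hsupp : suppFn X lam ≤ ∑ k, lam k * xs k := by
        apply csSup_le (hXne.image _)
        rintro _ ⟨x, hxX, rfl⟩
        -- first-order optimality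
        set a : Fin ℓ → ℝ := fun j => ∑ k, (A j k - A i k) * xs k with ha
        set b : Fin ℓ → ℝ := fun j => ∑ k, (A j k - A i k) * (x k - xs k) with hb
        have hD : 0 ≤ ∑ j ∈ Finset.univ.erase i, c j * Real.exp (a j) * b j := by
          apply aux_slope _ _ (aux_deriv (Finset.univ.erase i) c a b)
          intro t ht
          have hmem : xs + t • (x - xs) ∈ X := by
            have := hXconvex hxsX hxX (by linarith [ht.1, ht.2] : (0:ℝ) ≤ 1 - t) ht.1
              (by ring)
            convert this using 1
            funext k
            simp [Pi.smul_apply, smul_eq_mul]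
            ring
          have h0 : ∑ j ∈ Finset.univ.erase i, c j * Real.exp (a j + 0 * b j)
              = auxF c A i xs := by
            simp only [zero_mul, add_zero]
            rfl
          have hT : ∑ j ∈ Finset.univ.erase i, c j * Real.exp (a j + t * b j)
              = auxF c A i (xs + t • (x - xs)) := by
            apply Finset.sum_congr rfl
            intro j _
            congr 1
            rw [ha, hb, Finset.mul_sum, ← Finset.sum_add_distrib]
            congr 1
            apply Finset.sum_congr rfl
            intro k _
            simp only [Pi.add_apply, Pi.smul_apply, Pi.sub_apply, smul_eq_mul]
            ring
          show ∑ j ∈ Finset.univ.erase i, c j * Real.exp (a j + 0 * b j)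
              ≤ ∑ j ∈ Finset.univ.erase i, c j * Real.exp (a j + t * b j)
          rw [h0, hT]
          exact hmin hmem
        show ∑ k, lam k * x k ≤ ∑ k, lam k * xs k
        rw [hswap v lam hlam' x, hdot, neg_le_neg_iff]
        have hdiff : ∑ j ∈ Finset.univ.erase i, v j * (∑ k, (A j k - A i k) * x k)
            - ∑ j ∈ Finset.univ.erase i, v j * (∑ k, (A j k - A i k) * xs k)
            = ∑ j ∈ Finset.univ.erase i, c j * Real.exp (∑ k, (A j k - A i k) * xs k)
              * (∑ k, (A j k - A i k) * (x k - xs k)) := by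
          rw [← Finset.sum_sub_distrib]
          apply Finset.sum_congr rfl
          intro j _
          rw [hv, ← mul_sub, ← Finset.sum_sub_distrib]
          congr 1
          apply Finset.sum_congr rfl
          intro k _
          ring
        have : 0 ≤ ∑ j ∈ Finset.univ.erase i, v j * (∑ k, (A j k - A i k) * x k)
            - ∑ j ∈ Finset.univ.erase i, v j * (∑ k, (A j k - A i k) * xs k) := by
          rw [hdiff]; exact hD
        linarith
      have hxs := (hequiv xs).1 (hpos xs hxsX)
      rw [hlog]
      unfold auxF at hsum_v hxs
      linarith [hsupp, hdot, hsum_v, hxs]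
    · intro k
      simp [hlam]
  · -- backward
    rintro ⟨v, lam, hv0, hvc, hineq, hlin⟩ x hxX
    rw [hequiv x]
    have hlam' : ∀ k, lam k = -∑ j ∈ Finset.univ.erase i, v j * (A j k - A i k) := by
      intro k
      have := hlin k
      linarith
    have hdot := hswap v lam hlam' x
    have hle : ∑ k, lam k * x k ≤ suppFn X lam := by
      apply le_csSup
      · exact (hXcompact.image
          (continuous_finset_sum _ fun k _ => continuous_const.mul (continuous_apply k))).bddAbove
      · exact ⟨x, hxX, rfl⟩
    have hterm : ∀ j ∈ Finset.univ.erase i,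
        v j * (∑ k, (A j k - A i k) * x k) - v j * Real.log (v j / c j) + v j
          ≤ c j * Real.exp (∑ k, (A j k - A i k) * x k) := by
      intro j hj
      have hj' : j ≠ i := Finset.ne_of_mem_erase hj
      exact aux_fy (hc j hj') (hv0 j hj') (hvc j hj')
    have hsum := Finset.sum_le_sum hterm
    rw [Finset.sum_add_distrib, Finset.sum_sub_distrib] at hsum
    unfold auxF
    linarith
end

section
/- Let X ⊆ ℝⁿ be a nonempty compact convex set, let A ∈ ℝ^{ℓ×n} with rows A_1,…,A_ℓ, and let c ∈ ℝ^ℓ. Then c ∈ C_SAGE(A,X) if and only if there exist vectors c^{(1)},…,c^{(ℓ)} ∈ ℝ^ℓ with ∑_{i=1}^ℓ c^{(i)} = c such that for each i ∈ {1,…,ℓ}: c^{(i)}_j ≥ 0 for all j ≠ i, and there exist (v^{(i)}_j)_{j≠i} with v^{(i)}_j ≥ 0 for all j ≠ i, with v^{(i)}_j = 0 whenever c^{(i)}_j = 0, and λ^{(i)} ∈ ℝⁿ satisfying σ_X(λ^{(i)}) + ∑_{j≠i} v^{(i)}_j · log(v^{(i)}_j / c^{(i)}_j) − ∑_{j≠i}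 v^{(i)}_j ≤ c^{(i)}_i and ∑_{j≠i} v^{(i)}_j · (A_j − A_i) + λ^{(i)} = 0, where a summand v_j · log(v_j / c_j) is interpreted as 0 when v_j = 0. -/
open scoped BigOperators

/-- Membership in the conditional SAGE cone `C_SAGE(A, X)`:
`c` decomposes as `∑ i, c⁽ⁱ⁾` where `c⁽ⁱ⁾ ∈ C_AGE(A, X, i)`. -/
def memCSAGE {ℓ n : ℕ} (A : Fin ℓ → Fin n → ℝ) (X : Set (Fin n → ℝ))
    (c : Fin ℓ → ℝ) : Prop :=
  ∃ cs : Fin ℓ → Fin ℓ → ℝ,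
    (∀ j, ∑ i, cs i j = c j) ∧
    ∀ i, (∀ j, j ≠ i → 0 ≤ cs i j) ∧ ∀ x ∈ X, 0 ≤ Sig (cs i) A x

/- ------------------ auxiliary lemmas ------------------ -/

private lemma swap_sum {ℓ n : ℕ} (E : Finset (Fin ℓ)) (v : Fin ℓ → ℝ)
    (B : Fin ℓ → Fin n → ℝ) (y : Fin n → ℝ) :
    ∑ j ∈ E, v j * ∑ k, B j k * y k = ∑ k, (∑ j ∈ E, v j * B j k) * y k := by
  simp_rw [Finset.mul_sum, Finset.sum_mul, mul_assoc]
  rw [Finset.sum_comm]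

private lemma sig_split {ℓ n : ℕ} (c : Fin ℓ → ℝ) (A : Fin ℓ → Fin n → ℝ)
    (i : Fin ℓ) (x : Fin n → ℝ) :
    Sig c A x = Real.exp (∑ k, A i k * x k) *
      (c i + ∑ j ∈ Finset.univ.erase i, c j * Real.exp (∑ k, (A j k - A i k) * x k)) := by
  unfold Sig
  rw [← Finset.add_sum_erase _ _ (Finset.mem_univ i), mul_add, Finset.mul_sum]
  congr 1
  · ring
  · refine Finset.sum_congr rfl fun j _ => ?_
    have h : (∑ k, A j k * x k) = (∑ k, A i k * x k) + ∑ k, (A j k - A i k) * x k := by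
      rw [← Finset.sum_add_distrib]
      exact Finset.sum_congr rfl fun k _ => by ring
    rw [h, Real.exp_add]; ring

private lemma key_ineq {c v t : ℝ} (hc : 0 ≤ c) (hv : 0 ≤ v) (hvc : c = 0 → v = 0) :
    v * t + v - v * Real.log (v / c) ≤ c * Real.exp t := by
  rcases eq_or_lt_of_le hv with h0 | hv0
  · rw [← h0]
    have : (0:ℝ) ≤ c * Real.exp t := mul_nonneg hc (Real.exp_pos t).le
    simpa using this
  · have hc0 : 0 < c := by
      rcases eq_or_lt_of_le hc with h | h
      · exact absurd (hvc h.symm) (ne_of_gt hv0)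
      · exact h
    have h1 : Real.exp (t - Real.log (v / c)) * v = c * Real.exp t := by
      rw [Real.exp_sub, Real.exp_log (by positivity)]
      field_simp
    have h2 : ((t - Real.log (v / c)) + 1) * v ≤ Real.exp (t - Real.log (v / c)) * v :=
      mul_le_mul_of_nonneg_right (Real.add_one_le_exp _) hv
    nlinarith [h2, h1]

private lemma deriv_nonneg_aux (g : ℝ → ℝ) (d : ℝ) (hg : HasDerivAt g d 0)
    (h : ∀ t ∈ Set.Ioo (0:ℝ) 1, g 0 ≤ g t) : 0 ≤ d := by
  have h1 := hasDerivAt_iff_tendsto_slope.mp hg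
  have h2 : Filter.Tendsto (slope g 0) (nhdsWithin 0 (Set.Ioi 0)) (nhds d) :=
    h1.mono_left (nhdsWithin_mono 0 (fun t ht => ne_of_gt ht))
  refine ge_of_tendsto h2 ?_
  filter_upwards [Ioo_mem_nhdsGT_of_mem (Set.mem_Ico.mpr ⟨le_refl (0:ℝ), one_pos⟩)] with t ht
  have hts : slope g 0 t = (g t - g 0) / t := by
    rw [slope_def_field]; simp [div_eq_mul_inv]
  rw [hts]
  exact div_nonneg (sub_nonneg.mpr (h t ht)) ht.1.le

/-- Backward direction: a certificate implies nonnegativity on `X`. -/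
private lemma age_of_cert {ℓ n : ℕ} {X : Set (Fin n → ℝ)} (hXcompact : IsCompact X)
    (A : Fin ℓ → Fin n → ℝ) (i : Fin ℓ) (c : Fin ℓ → ℝ)
    (hc : ∀ j, j ≠ i → 0 ≤ c j) (v : Fin ℓ → ℝ) (lam : Fin n → ℝ)
    (hv : ∀ j, j ≠ i → 0 ≤ v j) (hvz : ∀ j, j ≠ i → c j = 0 → v j = 0)
    (hineq : suppFn X lam + ∑ j ∈ Finset.univ.erase i, v j * Real.log (v j / c j)
      - ∑ j ∈ Finset.univ.erase i, v j ≤ c i)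
    (hlam : ∀ k, (∑ j ∈ Finset.univ.erase i, v j * (A j k - A i k)) + lam k = 0) :
    ∀ x ∈ X, 0 ≤ Sig c A x := by
  intro x hx
  rw [sig_split c A i x]
  refine mul_nonneg (Real.exp_pos _).le ?_
  set E := Finset.univ.erase i with hE
  set B : Fin ℓ → Fin n → ℝ := fun j k => A j k - A i k with hB
  -- per-term estimate
  have hterm : ∀ j ∈ E, v j * (∑ k, B j k * x k) + v j - v j * Real.log (v j / c j)
      ≤ c j * Real.exp (∑ k, B j k * x k) := by
    intro j hj
    have hji : j ≠ i := Finset.ne_of_mem_erase hj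
    exact key_ineq (hc j hji) (hv j hji) (hvz j hji)
  have hsum := Finset.sum_le_sum hterm
  have hsplit : ∑ j ∈ E, (v j * (∑ k, B j k * x k) + v j - v j * Real.log (v j / c j))
      = (∑ j ∈ E, v j * (∑ k, B j k * x k)) + (∑ j ∈ E, v j)
        - ∑ j ∈ E, v j * Real.log (v j / c j) := by
    rw [Finset.sum_sub_distrib, Finset.sum_add_distrib]
  have hswap : ∑ j ∈ E, v j * (∑ k, B j k * x k) = ∑ k, (∑ j ∈ E, v j * B j k) * x k :=
    swap_sum E v B x
  have hlam2 : ∑ k, (∑ j ∈ E, v j * B j k) * x k = -∑ k, lam k * x k := by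
    rw [← Finset.sum_neg_distrib]
    refine Finset.sum_congr rfl fun k _ => ?_
    have := hlam k
    have hs : (∑ j ∈ E, v j * B j k) = -lam k := by linarith
    rw [hs]; ring
  -- support function bound
  have hbdd : BddAbove ((fun x => ∑ k, lam k * x k) '' X) := by
    have hcont : Continuous fun x : Fin n → ℝ => ∑ k, lam k * x k :=
      continuous_finset_sum _ fun k _ => continuous_const.mul (continuous_apply k)
    exact (hXcompact.image hcont).bddAbove
  have hsupp : ∑ k, lam k * x k ≤ suppFn X lam :=
    le_csSup hbdd (Set.mem_image_of_mem _ hx)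
  have := hsum
  rw [hsplit, hswap, hlam2] at this
  linarith

/-- Forward direction: nonnegativity on compact convex `X` yields a certificate. -/
private lemma cert_of_age {ℓ n : ℕ} {X : Set (Fin n → ℝ)} (hXne : X.Nonempty)
    (hXcompact : IsCompact X) (hXconvex : Convex ℝ X)
    (A : Fin ℓ → Fin n → ℝ) (i : Fin ℓ) (c : Fin ℓ → ℝ)
    (hc : ∀ j, j ≠ i → 0 ≤ c j) (hpos : ∀ x ∈ X, 0 ≤ Sig c A x) :
    ∃ (v : Fin ℓ → ℝ) (lam : Fin n → ℝ),
      (∀ j, j ≠ i → 0 ≤ v j) ∧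
      (∀ j, j ≠ i → c j = 0 → v j = 0) ∧
      suppFn X lam + ∑ j ∈ Finset.univ.erase i, v j * Real.log (v j / c j)
          - ∑ j ∈ Finset.univ.erase i, v j ≤ c i ∧
      ∀ k, (∑ j ∈ Finset.univ.erase i, v j * (A j k - A i k)) + lam k = 0 := by
  classical
  set E := Finset.univ.erase i with hE
  set B : Fin ℓ → Fin n → ℝ := fun j k => A j k - A i k with hB
  set f : (Fin n → ℝ) → ℝ := fun x => ∑ j ∈ E, c j * Real.exp (∑ k, B j k * x k) with hf
  have hfc : Continuous f := by
    refine continuous_finset_sum _ fun j _ => continuous_const.mul ?_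
    exact Real.continuous_exp.comp
      (continuous_finset_sum _ fun k _ => continuous_const.mul (continuous_apply k))
  obtain ⟨x₀, hx₀, hmin⟩ := hXcompact.exists_isMinOn hXne hfc.continuousOn
  set a : Fin ℓ → ℝ := fun j => ∑ k, B j k * x₀ k with ha
  set v : Fin ℓ → ℝ := fun j => c j * Real.exp (a j) with hvdef
  set lam : Fin n → ℝ := fun k => -∑ j ∈ E, v j * B j k with hlamdef
  -- Step A: x₀ maximizes lam ⬝ x over X
  have stepA : ∀ x ∈ X, ∑ k, lam k * x k ≤ ∑ k, lam k * x₀ k := by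
    intro x hx
    set b : Fin ℓ → ℝ := fun j => ∑ k, B j k * (x k - x₀ k) with hb
    set g : ℝ → ℝ := fun t => ∑ j ∈ E, c j * Real.exp (a j + t * b j) with hg
    have hder : HasDerivAt g (∑ j ∈ E, v j * b j) 0 := by
      refine HasDerivAt.fun_sum fun j _ => ?_
      have h1 : HasDerivAt (fun t : ℝ => a j + t * b j) (b j) 0 := by
        simpa using ((hasDerivAt_id (0:ℝ)).mul_const (b j)).const_add (a j)
      have h3 := h1.exp.const_mul (c j)
      convert h3 using 1
      case e'_4 => rfl
      case e'_9 => simp [hvdef]; ring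
    have hgt : ∀ t ∈ Set.Ioo (0:ℝ) 1, g 0 ≤ g t := by
      intro t ht
      have hmem : x₀ + t • (x - x₀) ∈ X :=
        hXconvex.add_smul_sub_mem hx₀ hx ⟨ht.1.le, ht.2.le⟩
      have hle := hmin hmem
      have hg0 : g 0 = f x₀ := by
        simp [hg, hf, ha]
      have hgt' : g t = f (x₀ + t • (x - x₀)) := by
        refine Finset.sum_congr rfl fun j _ => ?_
        congr 1
        congr 1
        simp only [ha, hb, Pi.add_apply, Pi.smul_apply, Pi.sub_apply, smul_eq_mul,
          Finset.mul_sum, ← Finset.sum_add_distrib]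
        exact Finset.sum_congr rfl fun k _ => by ring
      rw [hg0, hgt']
      exact hle
    have hd : 0 ≤ ∑ j ∈ E, v j * b j := deriv_nonneg_aux g _ hder hgt
    have hswap : ∑ j ∈ E, v j * b j = ∑ k, (∑ j ∈ E, v j * B j k) * (x k - x₀ k) :=
      swap_sum E v B (fun k => x k - x₀ k)
    have hdiff : ∑ k, lam k * (x k - x₀ k) ≤ 0 := by
      have : ∑ k, lam k * (x k - x₀ k) = -∑ j ∈ E, v j * b j := by
        rw [hswap, ← Finset.sum_neg_distrib]
        exact Finset.sum_congr rfl fun k _ => by simp [hlamdef]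
      rw [this]; linarith
    have hsub : ∑ k, lam k * (x k - x₀ k) = (∑ k, lam k * x k) - ∑ k, lam k * x₀ k := by
      rw [← Finset.sum_sub_distrib]
      exact Finset.sum_congr rfl fun k _ => by ring
    linarith [hsub ▸ hdiff]
  -- Step B: suppFn X lam = lam ⬝ x₀
  have stepB : suppFn X lam = ∑ k, lam k * x₀ k := by
    refine IsGreatest.csSup_eq ⟨Set.mem_image_of_mem _ hx₀, ?_⟩
    rintro y ⟨x, hx, rfl⟩
    exact stepA x hx
  -- Step C: entropy sum equals -lam ⬝ x₀
  have stepC : ∑ j ∈ E, v j * Real.log (v j / c j) = -∑ k, lam k * x₀ k := by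
    have hterm : ∀ j ∈ E, v j * Real.log (v j / c j) = v j * a j := by
      intro j hj
      have hji : j ≠ i := Finset.ne_of_mem_erase hj
      rcases eq_or_lt_of_le (hc j hji) with h0 | h0
      · simp [hvdef, ← h0]
      · have hvc : v j / c j = Real.exp (a j) := by
          rw [hvdef]
          field_simp
        rw [hvc, Real.log_exp]
    rw [Finset.sum_congr rfl hterm]
    have hswap : ∑ j ∈ E, v j * a j = ∑ k, (∑ j ∈ E, v j * B j k) * x₀ k :=
      swap_sum E v B x₀
    rw [hswap, ← Finset.sum_neg_distrib]
    exact Finset.sum_congr rfl fun k _ => by simp [hlamdef]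
  -- Step D: ∑ v = f x₀
  have stepD : ∑ j ∈ E, v j = f x₀ := rfl
  -- Step E: 0 ≤ c i + f x₀
  have stepE : 0 ≤ c i + f x₀ := by
    have h0 := hpos x₀ hx₀
    rw [sig_split c A i x₀] at h0
    have hexp : (0:ℝ) < Real.exp (∑ k, A i k * x₀ k) := Real.exp_pos _
    nlinarith [h0, hexp]
  refine ⟨v, lam, ?_, ?_, ?_, ?_⟩
  · intro j hj; exact mul_nonneg (hc j hj) (Real.exp_pos _).le
  · intro j _ hcj; simp [hvdef, hcj]
  · rw [stepB, stepC, stepD]; linarith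
  · intro k; simp [hlamdef]; exact add_neg_cancel _

/-- Relative-entropy characterization of the conditional SAGE cone.
The summand `v j * log (v j / c j)` is literally `0` when `v j = 0`. -/
theorem stmt3 {ℓ n : ℕ} (X : Set (Fin n → ℝ)) (hXne : X.Nonempty)
    (hXcompact : IsCompact X) (hXconvex : Convex ℝ X)
    (A : Fin ℓ → Fin n → ℝ) (c : Fin ℓ → ℝ) :
    memCSAGE A X c ↔
      ∃ cs : Fin ℓ → Fin ℓ → ℝ,
        (∀ j, ∑ i, cs i j = c j) ∧
        ∀ i, (∀ j, j ≠ i → 0 ≤ cs i j) ∧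
          ∃ (v : Fin ℓ → ℝ) (lam : Fin n → ℝ),
            (∀ j, j ≠ i → 0 ≤ v j) ∧
            (∀ j, j ≠ i → cs i j = 0 → v j = 0) ∧
            suppFn X lam
                + ∑ j ∈ Finset.univ.erase i, v j * Real.log (v j / cs i j)
                - ∑ j ∈ Finset.univ.erase i, v j ≤ cs i i ∧
            ∀ k, (∑ j ∈ Finset.univ.erase i, v j * (A j k - A i k)) + lam k = 0 := by
  constructor
  · rintro ⟨cs, hsum, h⟩
    exact ⟨cs, hsum, fun i =>
      ⟨(h i).1, cert_of_age hXne hXcompact hXconvex A i _ (h i).1 (h i).2⟩⟩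
  · rintro ⟨cs, hsum, h⟩
    refine ⟨cs, hsum, fun i => ⟨(h i).1, ?_⟩⟩
    obtain ⟨hnn, v, lam, hv, hvz, hineq, hlam⟩ := h i
    exact age_of_cert hXcompact A i _ hnn v lam hv hvz hineq hlam
end

section
/- Let A ∈ ℝ^{ℓ×n} with rows A_1,…,A_ℓ, let X ⊆ ℝⁿ, let c ∈ ℝ^ℓ, and let p ∈ ℕ. If the function x ↦ (∑_{j=1}^ℓ exp(A_j · x))^p · Sig(c,A)(x) is X-SAGE with exponents in E_{p+1}(A), then the function x ↦ (∑_{j=1}^ℓ exp(A_j · x))^{p+1} · Sig(c,A)(x) is X-SAGE with exponents in E_{p+2}(A). -/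
open scoped BigOperators

lemma mem_expSet_iff {ℓ n : ℕ} (A : Fin ℓ → Fin n → ℝ) (q : ℕ) (α : Fin n → ℝ) :
    α ∈ expSet A q ↔
      ∃ m : Fin ℓ → ℕ, (∑ j, m j = q) ∧ α = fun i => ∑ j, (m j : ℝ) * A j i := by
  unfold expSet
  simp only [Finset.mem_image, Finset.mem_filter, Finset.mem_univ, true_and]
  constructor
  · rintro ⟨m, hm, rfl⟩
    exact ⟨fun j => (m j : ℕ), hm, rfl⟩
  · rintro ⟨m, hm, rfl⟩
    refine ⟨fun j => ⟨m j, ?_⟩, ?_, rfl⟩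
    · have : m j ≤ q := hm ▸ Finset.single_le_sum (fun _ _ => Nat.zero_le _) (Finset.mem_univ j)
      omega
    · simpa using hm

lemma shift_mem_expSet {ℓ n : ℕ} (A : Fin ℓ → Fin n → ℝ) (q : ℕ) (j₀ : Fin ℓ)
    {α : Fin n → ℝ} (hα : α ∈ expSet A q) : α + A j₀ ∈ expSet A (q + 1) := by
  rw [mem_expSet_iff] at hα ⊢
  obtain ⟨m, hm, rfl⟩ := hα
  refine ⟨fun j => m j + if j = j₀ then 1 else 0, ?_, ?_⟩
  · simp [Finset.sum_add_distrib, hm]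
  · funext i
    simp [Pi.add_apply, add_mul, Finset.sum_add_distrib, ite_mul, Finset.sum_ite_eq']

lemma age_shift {ℓ n : ℕ} (A : Fin ℓ → Fin n → ℝ) (X : Set (Fin n → ℝ)) (q : ℕ)
    (j₀ : Fin ℓ) {g : (Fin n → ℝ) → ℝ} (hg : IsAGE X (expSet A q) g) :
    IsAGE X (expSet A (q + 1)) (fun x => Real.exp (∑ i, A j₀ i * x i) * g x) := by
  obtain ⟨⟨d, hd, α₀, hα₀⟩, hnn⟩ := hg
  refine ⟨⟨fun β => if β - A j₀ ∈ expSet A q then d (β - A j₀) else 0, ?_, α₀ + A j₀, ?_⟩, ?_⟩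
  · intro x
    simp only [ite_mul, zero_mul]
    rw [← Finset.sum_filter, hd x, Finset.mul_sum]
    refine Finset.sum_bij' (fun α _ => α + A j₀) (fun β _ => β - A j₀) ?_ ?_ ?_ ?_ ?_
    · intro α hα
      rw [Finset.mem_filter]
      exact ⟨shift_mem_expSet A q j₀ hα, by simpa using hα⟩
    · intro β hβ
      exact (Finset.mem_filter.mp hβ).2
    · intro α hα; simp
    · intro β hβ; simp
    · intro α hα
      have h1 : α + A j₀ - A j₀ = α := by simp
      rw [h1]
      rw [show (∑ i, (α + A j₀) i * x i) = (∑ i, α i * x i) + ∑ i, A j₀ i * x i by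
        rw [← Finset.sum_add_distrib]; congr 1; funext i; simp [Pi.add_apply, add_mul]]
      rw [Real.exp_add]; ring
  · intro β hβ hne
    dsimp only
    by_cases hP : β - A j₀ ∈ expSet A q
    · rw [if_pos hP]
      refine hα₀ _ hP fun hc => hne ?_
      rw [← hc]; simp
    · rw [if_neg hP]
  · intro x hx
    exact mul_nonneg (Real.exp_pos _).le (hnn x hx)

/-- Monotonicity of the SAGE hierarchy: membership at level `p` implies
membership at level `p + 1`. -/
theorem stmt4 {ℓ n : ℕ} (A : Fin ℓ → Fin n → ℝ) (X : Set (Fin n → ℝ))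
    (c : Fin ℓ → ℝ) (p : ℕ)
    (h : IsSAGE X (expSet A (p + 1))
      (fun x => (∑ j, Real.exp (∑ i, A j i * x i)) ^ p * Sig c A x)) :
    IsSAGE X (expSet A (p + 2))
      (fun x => (∑ j, Real.exp (∑ i, A j i * x i)) ^ (p + 1) * Sig c A x) := by
  obtain ⟨k, gs, hage, hsum⟩ := h
  refine ⟨ℓ * k, fun u x =>
      Real.exp (∑ i, A (finProdFinEquiv.symm u).1 i * x i) *
        gs (finProdFinEquiv.symm u).2 x, ?_, ?_⟩
  · intro u
    exact age_shift A X (p + 1) _ (hage _)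
  · intro x
    have hs : (∑ u : Fin (ℓ * k), Real.exp (∑ i, A (finProdFinEquiv.symm u).1 i * x i) *
        gs (finProdFinEquiv.symm u).2 x)
        = ∑ jt : Fin ℓ × Fin k, Real.exp (∑ i, A jt.1 i * x i) * gs jt.2 x := by
      refine (Fintype.sum_equiv finProdFinEquiv _ _ fun jt => ?_).symm
      simp
    rw [hs, Fintype.sum_prod_type]
    simp only [← Finset.mul_sum]
    rw [show (∑ j : Fin ℓ, Real.exp (∑ i, A j i * x i) * ∑ t, gs t x)
        = (∑ j : Fin ℓ, Real.exp (∑ i, A j i * x i)) * ∑ t, gs t x from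
      (Finset.sum_mul _ _ _).symm]
    rw [← hsum x]
    ring
end

section
/- For every compact convex set X ⊆ ℝⁿ there exists a set H of pairs (w, b) with w ∈ ℚⁿ and b ∈ ℚ such that X = { x ∈ ℝⁿ : for every (w, b) ∈ H, ∑_{i=1}^n w_i x_i ≤ b }, where the rational entries are viewed as real numbers. -/
open scoped BigOperators

/-- Every compact convex subset of `ℝⁿ` is the intersection of a (possibly
infinite) family of rational halfspaces. -/
theorem stmt6 {n : ℕ} (X : Set (Fin n → ℝ))
    (hXcompact : IsCompact X) (hXconvex : Convex ℝ X) :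
    ∃ H : Set ((Fin n → ℚ) × ℚ),
      X = {x : Fin n → ℝ | ∀ wb ∈ H, ∑ i, (wb.1 i : ℝ) * x i ≤ (wb.2 : ℝ)} := by
  classical
  refine ⟨{wb | ∀ x ∈ X, ∑ i, (wb.1 i : ℝ) * x i ≤ (wb.2 : ℝ)}, ?_⟩
  ext x
  simp only [Set.mem_setOf_eq]
  constructor
  · intro hx wb hwb
    exact hwb x hx
  · intro hx
    by_contra hxX
    rcases X.eq_empty_or_nonempty with hXe | ⟨a, ha⟩
    · have := hx ((0 : Fin n → ℚ), (-1 : ℚ)) (by intro y hy; simp [hXe] at hy)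
      norm_num at this
    -- separation
    obtain ⟨f, u, hfu, hux⟩ :=
      geometric_hahn_banach_closed_point hXconvex hXcompact.isClosed hxX
    set c : Fin n → ℝ := fun i => f (Pi.single i 1) with hc
    have hf : ∀ y : Fin n → ℝ, f y = ∑ i, c i * y i := by
      intro y
      have hy : y = ∑ i, y i • (Pi.single i 1 : Fin n → ℝ) := by
        funext j
        simp [Finset.sum_apply, Pi.single_apply, mul_ite, Finset.sum_ite_eq']
      conv_lhs => rw [hy]
      rw [map_sum]
      simp [map_smul, smul_eq_mul, mul_comm, hc]
    -- bound on X
    obtain ⟨M, hM⟩ := hXcompact.isBounded.subset_closedBall 0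
    set R : ℝ := max M ‖x‖ with hR
    have hR0 : 0 ≤ R := le_max_of_le_right (norm_nonneg x)
    have hRy : ∀ y ∈ X, ∀ i, |y i| ≤ R := by
      intro y hy i
      have h1 : ‖y‖ ≤ M := by
        have := hM hy
        simpa [Metric.mem_closedBall, dist_zero_right] using this
      exact le_trans (le_trans (norm_le_pi_norm y i) h1) (le_max_left _ _)
    have hRx : ∀ i, |x i| ≤ R :=
      fun i => le_trans (norm_le_pi_norm x i) (le_max_right _ _)
    -- max of f on X
    obtain ⟨a0, ha0X, ha0⟩ := hXcompact.exists_isMaxOn ⟨a, ha⟩ f.continuous.continuousOn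
    have ha0' : ∀ y ∈ X, f y ≤ f a0 := ha0
    set m : ℝ := f a0 with hm
    have hmx : m < f x := lt_trans (hfu a0 ha0X) hux
    set K : ℝ := n * (R + 1) + 1 with hK
    have hK0 : (0:ℝ) < K := by positivity
    have hKR : n * R < K := by
      have : (n:ℝ) * R ≤ n * (R + 1) := by nlinarith [Nat.cast_nonneg (α := ℝ) n]
      linarith
    set ε : ℝ := (f x - m) / (2 * K) with hε
    have hε0 : 0 < ε := by
      apply div_pos (by linarith) (by linarith)
    -- rational approximations
    have hw : ∀ i, ∃ q : ℚ, |c i - (q:ℝ)| < ε := fun i => exists_rat_near (c i) hε0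
    choose w hwq using hw
    -- key estimate
    have key : ∀ y : Fin n → ℝ, (∀ i, |y i| ≤ R) →
        |∑ i, (w i : ℝ) * y i - f y| < K * ε := by
      intro y hy
      rw [hf y]
      have h1 : |∑ i, (w i : ℝ) * y i - ∑ i, c i * y i| ≤ ∑ i : Fin n, ε * R := by
        rw [← Finset.sum_sub_distrib]
        refine le_trans (Finset.abs_sum_le_sum_abs _ _) ?_
        apply Finset.sum_le_sum
        intro i _
        rw [← sub_mul, abs_mul]
        have h2 : |(w i : ℝ) - c i| ≤ ε := by
          have := hwq i
          rw [abs_sub_comm] at this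
          linarith
        exact mul_le_mul h2 (hy i) (abs_nonneg _) (le_of_lt hε0)
      have h3 : ∑ i : Fin n, ε * R = n * R * ε := by
        simp [Finset.sum_const, Finset.card_univ]
        ring
      rw [h3] at h1
      calc |∑ i, (w i : ℝ) * y i - ∑ i, c i * y i| ≤ n * R * ε := h1
        _ < K * ε := by nlinarith
    have hKε : K * ε = (f x - m) / 2 := by
      field_simp [hε]
      rw [hε, mul_div_assoc', div_mul_eq_mul_div, div_eq_iff (mul_pos two_pos hK0).ne']
      ring
    have hxbig : (f x + m) / 2 < ∑ i, (w i : ℝ) * x i := by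
      have := key x hRx
      have := abs_lt.1 this
      linarith [this.1, hKε ▸ this.1]
    obtain ⟨b, hb1, hb2⟩ := exists_rat_btwn hxbig
    have hbH : ∀ y ∈ X, ∑ i, (w i : ℝ) * y i ≤ (b : ℝ) := by
      intro y hy
      have h4 := key y (hRy y hy)
      have h5 := (abs_lt.1 h4).2
      have h6 : f y ≤ m := ha0' y hy
      rw [hKε] at h5
      linarith
    have := hx (w, b) hbH
    simp at this
    linarith
end

section
/- Let n be a positive integer, let I be an arbitrary index set, and let f₀ and (f_i)_{i∈I} be homogeneous real polynomials in n variables. If f₀(x) > 0 for every x ∈ ℝⁿ \ {0} with x_j ≥ 0 for all j and f_i(x) ≥ 0 for all i ∈ I, then there exists a finite subset J ⊆ I such that f₀(x) > 0 for every x ∈ ℝⁿ \ {0} with x_j ≥ 0 for all j and f_i(x) ≥ 0 for all i ∈ J. -/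
open scoped BigOperators

lemma eval_smul_homog {n : ℕ} {p : MvPolynomial (Fin n) ℝ} {d : ℕ}
    (hp : p.IsHomogeneous d) (c : ℝ) (x : Fin n → ℝ) :
    MvPolynomial.eval (c • x) p = c ^ d * MvPolynomial.eval x p := by
  rw [MvPolynomial.eval_eq, MvPolynomial.eval_eq, Finset.mul_sum]
  refine Finset.sum_congr rfl fun m hm => ?_
  have hdeg : ∑ i ∈ m.support, m i = d := by
    have := hp (MvPolynomial.mem_support_iff.1 hm)
    simpa [Finsupp.weight_apply, Finsupp.sum] using this
  rw [← hdeg]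
  simp only [Pi.smul_apply, smul_eq_mul, mul_pow]
  rw [Finset.prod_mul_distrib, Finset.prod_pow_eq_pow_sum]
  ring

/-- If a homogeneous polynomial is positive on the intersection of the
nonnegative orthant (minus the origin) with infinitely many homogeneous
polynomial inequality constraints, then it is already positive on the
intersection with some finite subfamily of those constraints. -/
theorem stmt9 {n : ℕ} (hn : 0 < n) {I : Type*}
    (f0 : MvPolynomial (Fin n) ℝ) (f : I → MvPolynomial (Fin n) ℝ)
    (h0 : ∃ d : ℕ, f0.IsHomogeneous d)
    (hf : ∀ i, ∃ d : ℕ, (f i).IsHomogeneous d)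
    (hpos : ∀ x : Fin n → ℝ, x ≠ 0 → (∀ j, 0 ≤ x j) →
      (∀ i, 0 ≤ MvPolynomial.eval x (f i)) → 0 < MvPolynomial.eval x f0) :
    ∃ J : Finset I, ∀ x : Fin n → ℝ, x ≠ 0 → (∀ j, 0 ≤ x j) →
      (∀ i ∈ J, 0 ≤ MvPolynomial.eval x (f i)) → 0 < MvPolynomial.eval x f0 := by
  classical
  obtain ⟨d0, h0⟩ := h0
  set K : Set (Fin n → ℝ) :=
    stdSimplex ℝ (Fin n) ∩ {x | MvPolynomial.eval x f0 ≤ 0} with hK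
  have hKc : IsCompact K :=
    (isCompact_stdSimplex ℝ (Fin n)).inter_right
      (isClosed_le (MvPolynomial.continuous_eval f0) continuous_const)
  have hZ : ∀ i : I, IsClosed {x : Fin n → ℝ | 0 ≤ MvPolynomial.eval x (f i)} :=
    fun i => isClosed_le continuous_const (MvPolynomial.continuous_eval (f i))
  have hempty : K ∩ ⋂ i, {x : Fin n → ℝ | 0 ≤ MvPolynomial.eval x (f i)} = ∅ := by
    ext x
    simp only [Set.mem_inter_iff, Set.mem_iInter, Set.mem_empty_iff_false, iff_false,
      Set.mem_setOf_eq, hK, not_and, stdSimplex]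
    rintro ⟨⟨hxnn, hxsum⟩, hx0⟩ hall
    have hxne : x ≠ 0 := by
      rintro rfl
      simp at hxsum
    exact absurd (hpos x hxne hxnn hall) (not_lt.2 hx0)
  obtain ⟨J, hJ⟩ := hKc.elim_finite_subfamily_closed _ hZ hempty
  refine ⟨J, fun x hx hxnn hxJ => ?_⟩
  have hex : ∃ j, 0 < x j := by
    by_contra h
    push_neg at h
    exact hx (funext fun j => le_antisymm (h j) (hxnn j))
  obtain ⟨j0, hj0⟩ := hex
  set t : ℝ := ∑ j, x j with ht
  have htpos : 0 < t :=
    Finset.sum_pos' (fun j _ => hxnn j) ⟨j0, Finset.mem_univ _, hj0⟩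
  set y : Fin n → ℝ := t⁻¹ • x with hy
  have hy_simplex : y ∈ stdSimplex ℝ (Fin n) := by
    constructor
    · intro j
      exact mul_nonneg (inv_nonneg.2 htpos.le) (hxnn j)
    · simp only [hy, Pi.smul_apply, smul_eq_mul, ← Finset.mul_sum, ← ht]
      field_simp
  have hyZ : ∀ i ∈ J, 0 ≤ MvPolynomial.eval y (f i) := by
    intro i hi
    obtain ⟨di, hdi⟩ := hf i
    rw [hy, eval_smul_homog hdi]
    exact mul_nonneg (pow_nonneg (inv_nonneg.2 htpos.le) _) (hxJ i hi)
  have hyK : y ∉ K := by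
    intro hyk
    have : y ∈ K ∩ ⋂ i ∈ J, {x : Fin n → ℝ | 0 ≤ MvPolynomial.eval x (f i)} :=
      ⟨hyk, by simpa [Set.mem_iInter] using hyZ⟩
    rw [hJ] at this
    exact this
  have hy0 : 0 < MvPolynomial.eval y f0 := by
    by_contra h
    exact hyK ⟨hy_simplex, not_lt.1 h⟩
  have hxy : x = t • y := by
    rw [hy, smul_smul, mul_inv_cancel₀ htpos.ne', one_smul]
  rw [hxy, eval_smul_homog h0]
  exact mul_pos (pow_pos htpos _) hy0
end

section
/- Let f : ℝ² → ℝ be defined by f(x) = exp(1.5·x₁) − exp(x₂) − exp(−x₂), and let X = { x ∈ ℝ² : x₁ = 1 and −1 ≤ x₂ ≤ 1 }. Then there do NOT exist vectors c^{(1)}, c^{(2)}, c^{(3)} ∈ ℝ³ with c^{(1)} + c^{(2)} + c^{(3)} = (1, −1, −1) such that for each i ∈ {1,2,3}: c^{(i)}_j ≥ 0 for all j ≠ i, and c^{(i)}₁·exp(1.5·x₁) + c^{(i)}₂·exp(x₂) + c^{(i)}₃·exp(−x₂) ≥ 0 for all x ∈ X. In other words, f is not an X-SAGE function with respect to its own exponent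 set {(1.5,0), (0,1), (0,−1)}. -/
open scoped BigOperators

/-- The signomial `f(x) = exp(1.5 x₁) − exp(x₂) − exp(−x₂)`, positive on
`X = {x : x₁ = 1, −1 ≤ x₂ ≤ 1}`, is nevertheless not `X`-SAGE with respect to
its own exponent set: its coefficient vector `(1, −1, −1)` admits no
decomposition into three vectors, the `i`-th nonnegative off coordinate `i`
and defining a signomial nonnegative on `X`. -/
theorem stmt11 :
    ¬ ∃ cs : Fin 3 → Fin 3 → ℝ,
      (∀ j, cs 0 j + cs 1 j + cs 2 j = (![1, -1, -1] : Fin 3 → ℝ) j) ∧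
      ∀ i : Fin 3, (∀ j, j ≠ i → 0 ≤ cs i j) ∧
        ∀ x : Fin 2 → ℝ, x 0 = 1 → -1 ≤ x 1 → x 1 ≤ 1 →
          0 ≤ cs i 0 * Real.exp (1.5 * x 0) + cs i 1 * Real.exp (x 1)
              + cs i 2 * Real.exp (-x 1) := by
  rintro ⟨cs, hsum, h⟩
  have hs0 := hsum 0
  have hs1 := hsum 1
  have hs2 := hsum 2
  simp only [Matrix.cons_val_zero, Matrix.cons_val_one, Matrix.head_cons,
    Matrix.cons_val_two, Matrix.tail_cons] at hs0 hs1 hs2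
  -- nonnegativity off-diagonal
  have a1 : 0 ≤ cs 0 1 := (h 0).1 1 (by decide)
  have a2 : 0 ≤ cs 0 2 := (h 0).1 2 (by decide)
  have b0 : 0 ≤ cs 1 0 := (h 1).1 0 (by decide)
  have b2 : 0 ≤ cs 1 2 := (h 1).1 2 (by decide)
  have c0 : 0 ≤ cs 2 0 := (h 2).1 0 (by decide)
  have c1 : 0 ≤ cs 2 1 := (h 2).1 1 (by decide)
  -- evaluate at x = (1,0), (1,1), (1,-1)
  have hA := (h 0).2 ![1, 0] rfl (by norm_num) (by norm_num)
  have hB := (h 1).2 ![1, 1] rfl (by norm_num) (by norm_num)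
  have hC := (h 2).2 ![1, (-1 : ℝ)] rfl (by norm_num) (by norm_num)
  simp only [Matrix.cons_val_zero, Matrix.cons_val_one, Matrix.head_cons] at hA hB hC
  norm_num at hA hB hC
  -- numeric facts about exp
  have e1pos : (0:ℝ) < Real.exp 1 := Real.exp_pos 1
  have ehpos : (0:ℝ) < Real.exp 0.5 := Real.exp_pos 0.5
  have hsplit : Real.exp 1.5 = Real.exp 1 * Real.exp 0.5 := by
    rw [← Real.exp_add]; norm_num
  have hsq : Real.exp 0.5 * Real.exp 0.5 = Real.exp 1 := by
    rw [← Real.exp_add]; norm_num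
  have e1lt : Real.exp 1 < 2.7182818286 := Real.exp_one_lt_d9
  have ehlt : Real.exp 0.5 < 2 := by nlinarith
  have hE : Real.exp 1.5 < 2 * Real.exp 1 := by
    rw [hsplit]; nlinarith
  have e1gt : (1:ℝ) < Real.exp 1 := by
    have := Real.exp_one_gt_d9; linarith
  have em1 : Real.exp (-1 : ℝ) < Real.exp 1 := Real.exp_lt_exp.2 (by norm_num)
  have em1pos : (0:ℝ) < Real.exp (-1 : ℝ) := Real.exp_pos _
  -- the contradiction
  nlinarith [mul_nonneg b2 (le_of_lt (sub_pos.2 em1)),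
    mul_nonneg c1 (le_of_lt (sub_pos.2 em1)),
    mul_nonneg (add_nonneg a1 a2) (le_of_lt (sub_pos.2 (lt_trans one_lt_two (by linarith : (2:ℝ) < Real.exp 1 + 1))))]
end

section
/- Let n be a positive integer, let y ∈ ℝⁿ satisfy y_i > 0 for all i, let b ∈ ℚⁿ, let d ∈ ℚ, and let m be a positive integer such that m·b_i ∈ ℤ for every i. Then ∑_{i=1}^n b_i · log(y_i) ≤ d if and only if exp(m·d) · ∏_{i : b_i < 0} y_i^{−m·b_i} − ∏_{i : b_i > 0} y_i^{m·b_i} ≥ 0, where the exponents −m·b_i and m·b_i are the corresponding positive integers and rational numbers are coerced into reals. -/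
open scoped BigOperators

/-- A rational halfspace constraint `b ⬝ log y ≤ d` on the componentwise
logarithm of a positive vector `y` is equivalent to a monomial-difference
inequality in `y`, obtained by exponentiating and clearing denominators with
a common multiplier `m` (so that every `m * bᵢ` is an integer). -/
theorem stmt13 {n : ℕ} (hn : 0 < n) (y : Fin n → ℝ) (hy : ∀ i, 0 < y i)
    (b : Fin n → ℚ) (d : ℚ) (m : ℕ) (hm : 0 < m)
    (hmb : ∀ i, ∃ z : ℤ, (m : ℚ) * b i = (z : ℚ)) :
    (∑ i, (b i : ℝ) * Real.log (y i) ≤ (d : ℝ)) ↔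
      0 ≤ Real.exp ((m : ℝ) * (d : ℝ)) *
            (∏ i ∈ Finset.univ.filter fun i => b i < 0,
              y i ^ (-((m : ℝ) * (b i : ℝ))))
          - ∏ i ∈ Finset.univ.filter fun i => 0 < b i,
              y i ^ ((m : ℝ) * (b i : ℝ)) := by
  set P := ∏ i ∈ Finset.univ.filter fun i => 0 < b i, y i ^ ((m : ℝ) * (b i : ℝ)) with hP
  set Q := ∏ i ∈ Finset.univ.filter fun i => b i < 0, y i ^ (-((m : ℝ) * (b i : ℝ))) with hQ
  have hQpos : 0 < Q := Finset.prod_pos fun i _ => Real.rpow_pos_of_pos (hy i) _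
  -- total product equals exp of scaled sum
  have hprod : (∏ i, y i ^ ((m : ℝ) * (b i : ℝ))) =
      Real.exp ((m : ℝ) * ∑ i, (b i : ℝ) * Real.log (y i)) := by
    rw [Finset.mul_sum, Real.exp_sum]
    refine Finset.prod_congr rfl fun i _ => ?_
    rw [Real.rpow_def_of_pos (hy i)]
    ring_nf
  -- total product splits as P * Q⁻¹
  have hsplit : (∏ i, y i ^ ((m : ℝ) * (b i : ℝ))) = P * Q⁻¹ := by
    rw [← Finset.prod_filter_mul_prod_filter_not Finset.univ (fun i => 0 < b i)]
    congr 1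
    have hsub : (Finset.univ.filter fun i => b i < 0) ⊆
        (Finset.univ.filter fun i => ¬ 0 < b i) := by
      intro i hi
      simp only [Finset.mem_filter, Finset.mem_univ, true_and] at hi ⊢
      exact not_lt.2 hi.le
    rw [hQ, ← Finset.prod_inv_distrib]
    calc ∏ i ∈ Finset.univ.filter fun i => ¬ 0 < b i, y i ^ ((m : ℝ) * (b i : ℝ))
        = ∏ i ∈ Finset.univ.filter fun i => b i < 0, y i ^ ((m : ℝ) * (b i : ℝ)) := by
          refine (Finset.prod_subset hsub fun i hmem hni => ?_).symm
          simp only [Finset.mem_filter, Finset.mem_univ, true_and, not_lt] at hmem hni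
          have : b i = 0 := le_antisymm hmem hni
          simp [this]
      _ = ∏ i ∈ Finset.univ.filter fun i => b i < 0, (y i ^ (-((m : ℝ) * (b i : ℝ))))⁻¹ := by
          refine Finset.prod_congr rfl fun i _ => ?_
          rw [← Real.rpow_neg (hy i).le, neg_neg]
  constructor
  · intro h
    have h1 : (m : ℝ) * ∑ i, (b i : ℝ) * Real.log (y i) ≤ (m : ℝ) * d :=
      mul_le_mul_of_nonneg_left h (by positivity)
    have h2 : P * Q⁻¹ ≤ Real.exp ((m : ℝ) * d) := by
      rw [← hsplit, hprod]; exact Real.exp_le_exp.2 h1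
    have h3 := mul_le_mul_of_nonneg_right h2 hQpos.le
    rw [mul_assoc, inv_mul_cancel₀ hQpos.ne', mul_one] at h3
    linarith
  · intro h
    have h2 : P * Q⁻¹ ≤ Real.exp ((m : ℝ) * d) := by
      have h3 : P ≤ Real.exp ((m : ℝ) * d) * Q := by linarith
      have h4 := mul_le_mul_of_nonneg_right h3 (inv_nonneg.2 hQpos.le)
      rwa [mul_assoc, mul_inv_cancel₀ hQpos.ne', mul_one] at h4
    rw [← hsplit, hprod, Real.exp_le_exp] at h2
    have hm' : (0:ℝ) < m := by positivity
    exact le_of_mul_le_mul_left h2 hm'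
end

section
/- (Dickinson–Povh Positivstellensatz) Let f₀, f₁, …, f_m be homogeneous real polynomials in n variables. If f₀(x) > 0 for every x ∈ ℝⁿ \ {0} with x_i ≥ 0 for all i and f_j(x) ≥ 0 for all j ∈ {1,…,m}, then there exist p ∈ ℕ and homogeneous polynomials g₀, g₁, …, g_m in n variables, each having only nonnegative coefficients, such that (x₁ + ⋯ + x_n)^p · f₀ = g₀ + ∑_{j=1}^m f_j · g_j as polynomials. -/
open scoped BigOperators

open MvPolynomial Finset BigOperators Nat

lemma prod_X_pow_univ {n : ℕ} (k : Fin n → ℕ) :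
    (∏ i, (MvPolynomial.X i : MvPolynomial (Fin n) ℝ) ^ k i) =
      MvPolynomial.monomial (Finsupp.equivFunOnFinite.symm k) 1 := by
  set u := Finsupp.equivFunOnFinite.symm k with hu
  have hk : ∀ i, k i = u i := fun i => rfl
  rw [← MvPolynomial.prod_X_pow_eq_monomial]
  simp_rw [hk]
  apply (Finset.prod_subset (Finset.subset_univ _) _).symm
  intro x _ hx
  rw [Finsupp.notMem_support_iff] at hx
  rw [hx, pow_zero]

lemma coeff_sigma_pow {n N : ℕ} (u : Fin n →₀ ℕ) :
    MvPolynomial.coeff u ((∑ i, MvPolynomial.X i : MvPolynomial (Fin n) ℝ) ^ N) =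
      if (∑ i, u i) = N then (Nat.multinomial Finset.univ u : ℝ) else 0 := by
  rw [Finset.sum_pow_eq_sum_piAntidiag, MvPolynomial.coeff_sum]
  have hterm : ∀ k ∈ Finset.piAntidiag Finset.univ N,
      MvPolynomial.coeff u ((Nat.multinomial Finset.univ k : MvPolynomial (Fin n) ℝ) *
        ∏ i, MvPolynomial.X i ^ k i) =
      if k = ⇑u then (Nat.multinomial Finset.univ k : ℝ) else 0 := by
    intro k _
    rw [prod_X_pow_univ, ← MvPolynomial.C_eq_coe_nat, MvPolynomial.coeff_C_mul,
      MvPolynomial.coeff_monomial]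
    have : Finsupp.equivFunOnFinite.symm k = u ↔ k = ⇑u := by
      constructor
      · intro h; rw [← h]; rfl
      · intro h; rw [h]; simp
    split_ifs with h1 h2 h2 <;> simp_all [this]
  rw [Finset.sum_congr rfl hterm, Finset.sum_ite_eq' (Finset.piAntidiag Finset.univ N) (⇑u)
    (fun k => (Nat.multinomial Finset.univ k : ℝ))]
  have : ⇑u ∈ Finset.piAntidiag Finset.univ N ↔ (∑ i, u i) = N := by
    rw [Finset.mem_piAntidiag]
    simp
  split_ifs with h1 h2 h2 <;> simp_all

lemma homog_support_sum {n d : ℕ} {f : MvPolynomial (Fin n) ℝ} (hf : f.IsHomogeneous d)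
    {v : Fin n →₀ ℕ} (hv : v ∈ f.support) : ∑ i, v i = d := by
  have h1 := hf (MvPolynomial.mem_support_iff.mp hv)
  rw [← h1]
  rw [Finsupp.weight_apply]
  rw [Finsupp.sum]
  rw [Finset.sum_subset (Finset.subset_univ v.support)]
  · simp
  · intro x _ hx
    rw [Finsupp.notMem_support_iff] at hx
    simp [hx]

lemma coeff_key {n N d : ℕ} (f : MvPolynomial (Fin n) ℝ) (hf : f.IsHomogeneous d)
    (α : Fin n →₀ ℕ) (hα : ∑ i, α i = N + d) :
    MvPolynomial.coeff α ((∑ i, MvPolynomial.X i : MvPolynomial (Fin n) ℝ) ^ N * f)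
        * ∏ i, ((α i)! : ℝ)
      = (N ! : ℝ) * ∑ v ∈ f.support, MvPolynomial.coeff v f *
          ∏ i, ((α i).descFactorial (v i) : ℝ) := by
  conv_lhs => rw [f.as_sum, Finset.mul_sum, MvPolynomial.coeff_sum]
  rw [Finset.sum_mul, Finset.mul_sum]
  apply Finset.sum_congr rfl
  intro v hv
  have hvd : ∑ i, v i = d := homog_support_sum hf hv
  rw [MvPolynomial.coeff_mul_monomial']
  by_cases hle : v ≤ α
  · rw [if_pos hle]
    have hsub : ∑ i, (α - v) i = N := by
      have h1 : ∀ i, (α - v) i = α i - v i := fun i => Finsupp.tsub_apply α v i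
      simp_rw [h1]
      have h2 : ∑ x, ((α x - v x) + v x) = ∑ x, α x :=
        Finset.sum_congr rfl (fun i _ => by have := Finsupp.le_def.mp hle i; omega)
      rw [Finset.sum_add_distrib] at h2
      omega
    rw [coeff_sigma_pow, if_pos hsub]
    -- now: mult (α-v) * coeff v f * ∏ α! = N! * (coeff v f * ∏ descF)
    have hnat : Nat.multinomial Finset.univ (α - v) * ∏ i, (α i)! =
        N ! * ∏ i, (α i).descFactorial (v i) := by
      have hfac : ∀ i, (α i)! = ((α - v) i)! * (α i).descFactorial (v i) := by
        intro i
        have hle' : v i ≤ α i := Finsupp.le_def.mp hle i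
        rw [Finsupp.tsub_apply]
        exact (Nat.factorial_mul_descFactorial hle').symm
      calc Nat.multinomial Finset.univ (α - v) * ∏ i, (α i)!
          = Nat.multinomial Finset.univ (α - v) * ((∏ i, ((α - v) i)!) *
              ∏ i, (α i).descFactorial (v i)) := by
            rw [← Finset.prod_mul_distrib]; simp_rw [← hfac]
        _ = ((∏ i, ((α - v) i)!) * Nat.multinomial Finset.univ (α - v)) *
              ∏ i, (α i).descFactorial (v i) := by ring
        _ = N ! * ∏ i, (α i).descFactorial (v i) := by
            rw [Nat.multinomial_spec, hsub]
    have hcast : (Nat.multinomial Finset.univ ⇑(α - v) : ℝ) * ∏ i, ((α i)! : ℝ) =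
        (N ! : ℝ) * ∏ i, ((α i).descFactorial (v i) : ℝ) := by
      exact_mod_cast congrArg (Nat.cast : ℕ → ℝ) hnat
    linear_combination MvPolynomial.coeff v f * hcast
  · rw [if_neg hle]
    obtain ⟨i, hi⟩ : ∃ i, α i < v i := by
      by_contra h
      push_neg at h
      exact hle (Finsupp.le_def.mpr h)
    have : (α i).descFactorial (v i) = 0 := Nat.descFactorial_eq_zero_iff_lt.mpr hi
    have hprod : ∏ i, ((α i).descFactorial (v i) : ℝ) = 0 :=
      Finset.prod_eq_zero (Finset.mem_univ i) (by rw [this, Nat.cast_zero])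
    rw [hprod]
    ring

lemma descF_cast (a b : ℕ) :
    ((a.descFactorial b : ℝ)) = ∏ k ∈ Finset.range b, ((a : ℝ) - k) := by
  by_cases h : b ≤ a
  · rw [Nat.descFactorial_eq_prod_range, Nat.cast_prod]
    apply Finset.prod_congr rfl
    intro k hk
    rw [Finset.mem_range] at hk
    have : k ≤ a := by omega
    push_cast [this]
    ring
  · push_neg at h
    rw [Nat.descFactorial_eq_zero_iff_lt.mpr h, Nat.cast_zero]
    symm
    apply Finset.prod_eq_zero (Finset.mem_range.mpr h)
    simp

lemma abs_prod_le_one {ι : Type*} (s : Finset ι) (u : ι → ℝ) (h : ∀ i ∈ s, |u i| ≤ 1) :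
    |∏ i ∈ s, u i| ≤ 1 := by
  rw [Finset.abs_prod]
  exact Finset.prod_le_one (fun i _ => abs_nonneg _) h

lemma prod_diff_bound {ι : Type*} (s : Finset ι) (u w : ι → ℝ)
    (hu : ∀ i ∈ s, |u i| ≤ 1) (hw : ∀ i ∈ s, |w i| ≤ 1) :
    |∏ i ∈ s, u i - ∏ i ∈ s, w i| ≤ ∑ i ∈ s, |u i - w i| := by
  classical
  induction s using Finset.cons_induction with
  | empty => simp
  | cons a s ha ih =>
    rw [Finset.prod_cons, Finset.prod_cons, Finset.sum_cons]
    have hu' : ∀ i ∈ s, |u i| ≤ 1 := fun i hi => hu i (Finset.mem_cons_of_mem hi)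
    have hw' : ∀ i ∈ s, |w i| ≤ 1 := fun i hi => hw i (Finset.mem_cons_of_mem hi)
    have h1 : |u a * ∏ i ∈ s, u i - w a * ∏ i ∈ s, w i|
        ≤ |u a| * |∏ i ∈ s, u i - ∏ i ∈ s, w i| + |u a - w a| * |∏ i ∈ s, w i| := by
      calc |u a * ∏ i ∈ s, u i - w a * ∏ i ∈ s, w i|
          = |u a * (∏ i ∈ s, u i - ∏ i ∈ s, w i) + (u a - w a) * ∏ i ∈ s, w i| := by ring_nf
        _ ≤ |u a * (∏ i ∈ s, u i - ∏ i ∈ s, w i)| + |(u a - w a) * ∏ i ∈ s, w i| := abs_add_le _ _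
        _ = |u a| * |∏ i ∈ s, u i - ∏ i ∈ s, w i| + |u a - w a| * |∏ i ∈ s, w i| := by
            rw [abs_mul, abs_mul]
    refine h1.trans ?_
    have h2 : |u a| * |∏ i ∈ s, u i - ∏ i ∈ s, w i| ≤ |∏ i ∈ s, u i - ∏ i ∈ s, w i| := by
      apply mul_le_of_le_one_left (abs_nonneg _) (hu a (Finset.mem_cons_self a s))
    have h3 : |u a - w a| * |∏ i ∈ s, w i| ≤ |u a - w a| :=
      mul_le_of_le_one_right (abs_nonneg _) (abs_prod_le_one s w hw')
    have := ih hu' hw'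
    linarith

lemma sigma_homog {n N : ℕ} :
    ((∑ i, MvPolynomial.X i : MvPolynomial (Fin n) ℝ) ^ N).IsHomogeneous N := by
  have h : (∑ i, MvPolynomial.X i : MvPolynomial (Fin n) ℝ).IsHomogeneous 1 :=
    MvPolynomial.IsHomogeneous.sum Finset.univ _ 1 (fun i _ => MvPolynomial.isHomogeneous_X _ i)
  simpa using h.pow N

set_option maxHeartbeats 1000000 in
theorem polya {n d : ℕ} (hn : 0 < n) (f : MvPolynomial (Fin n) ℝ) (hf : f.IsHomogeneous d)
    (hpos : ∀ x ∈ stdSimplex ℝ (Fin n), 0 < MvPolynomial.eval x f) :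
    ∃ N0 : ℕ, ∀ N, N0 ≤ N → ∀ α : Fin n →₀ ℕ,
      0 ≤ MvPolynomial.coeff α ((∑ i, MvPolynomial.X i : MvPolynomial (Fin n) ℝ) ^ N * f) := by
  classical
  -- the simplex is nonempty and compact
  have hΔne : (stdSimplex ℝ (Fin n)).Nonempty := by
    refine ⟨fun i => if i = ⟨0, hn⟩ then 1 else 0, fun i => by positivity, ?_⟩
    rw [Finset.sum_ite_eq' Finset.univ]
    simp
  obtain ⟨x0, hx0Δ, hx0min⟩ := (isCompact_stdSimplex ℝ (Fin n)).exists_isMinOn hΔne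
    (MvPolynomial.continuous_eval (p := f)).continuousOn
  set c : ℝ := MvPolynomial.eval x0 f with hc_def
  have hc : 0 < c := hpos x0 hx0Δ
  set A : ℝ := (d : ℝ)^2 * ∑ v ∈ f.support, |MvPolynomial.coeff v f| + 1 with hA_def
  have hA : 0 < A := by
    have : 0 ≤ (d : ℝ)^2 * ∑ v ∈ f.support, |MvPolynomial.coeff v f| := by positivity
    linarith
  refine ⟨⌈A / c⌉₊ + 1, fun N hN α => ?_⟩
  by_cases hzero : MvPolynomial.coeff α ((∑ i, MvPolynomial.X i : MvPolynomial (Fin n) ℝ) ^ N * f) = 0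
  · rw [hzero]
  -- degree of α
  have hhom : ((∑ i, MvPolynomial.X i : MvPolynomial (Fin n) ℝ) ^ N * f).IsHomogeneous (N + d) :=
    sigma_homog.mul hf
  have hαdeg : ∑ i, α i = N + d :=
    homog_support_sum hhom (MvPolynomial.mem_support_iff.mpr hzero)
  have hN1 : 1 ≤ N := le_trans (by omega) hN
  set T : ℝ := (N : ℝ) + d with hT_def
  have hT : 0 < T := by positivity -- fix: N ≥ 1
  set ε : ℝ := 1 / T with hε_def
  have hε : 0 ≤ ε := by positivity
  set t : Fin n → ℝ := fun i => (α i : ℝ) / T with ht_def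
  have htΔ : t ∈ stdSimplex ℝ (Fin n) := by
    constructor
    · intro i; positivity
    · rw [← Finset.sum_div]
      rw [div_eq_one_iff_eq (ne_of_gt hT)]
      rw [← Nat.cast_sum, hαdeg]
      push_cast; ring
  have ht01 : ∀ i, 0 ≤ t i ∧ t i ≤ 1 := by
    intro i
    refine ⟨htΔ.1 i, ?_⟩
    have := Finset.single_le_sum (f := t) (fun j _ => htΔ.1 j) (Finset.mem_univ i)
    rw [htΔ.2] at this
    exact this
  -- key formula
  have hkey := coeff_key f hf α hαdeg
  -- rewrite descFactorial products
  have hprodeq : ∀ v ∈ f.support,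
      (∏ i, ((α i).descFactorial (v i) : ℝ))
        = T^d * ∏ i, ∏ k ∈ Finset.range (v i), (t i - k * ε) := by
    intro v hv
    have hvd : ∑ i, v i = d := homog_support_sum hf hv
    have h1 : ∀ i, ((α i).descFactorial (v i) : ℝ)
        = ∏ k ∈ Finset.range (v i), (T * (t i - k * ε)) := by
      intro i
      rw [descF_cast]
      apply Finset.prod_congr rfl
      intro k _
      rw [ht_def, hε_def]
      field_simp
    simp_rw [h1, Finset.prod_mul_distrib, Finset.prod_const, Finset.card_range]
    rw [Finset.prod_pow_eq_pow_sum, hvd]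
  -- the perturbed sum F
  set F : ℝ := ∑ v ∈ f.support, MvPolynomial.coeff v f *
      ∏ i, ∏ k ∈ Finset.range (v i), (t i - k * ε) with hF_def
  have hkey2 : MvPolynomial.coeff α ((∑ i, MvPolynomial.X i : MvPolynomial (Fin n) ℝ) ^ N * f)
      * ∏ i, ((α i)! : ℝ) = (N ! : ℝ) * (T^d * F) := by
    rw [hkey, hF_def]
    simp only [Finset.mul_sum]
    apply Finset.sum_congr rfl
    intro v hv
    rw [hprodeq v hv]
    ring
  -- compare F with eval t f
  have hdT : (d : ℝ) ≤ T := by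
    rw [hT_def]
    have h1 : (1 : ℝ) ≤ (N : ℝ) := by exact_mod_cast hN1
    linarith
  have hdε : (d : ℝ) * ε ≤ 1 := by
    rw [hε_def, mul_one_div, div_le_one hT]
    exact hdT
  have hFbound : |F - MvPolynomial.eval t f| ≤ A * ε := by
    rw [MvPolynomial.eval_eq', hF_def, ← Finset.sum_sub_distrib]
    refine (Finset.abs_sum_le_sum_abs _ _).trans ?_
    have hterm : ∀ v ∈ f.support,
        |MvPolynomial.coeff v f * (∏ i, ∏ k ∈ Finset.range (v i), (t i - k * ε))
          - MvPolynomial.coeff v f * ∏ i, t i ^ v i|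
        ≤ |MvPolynomial.coeff v f| * ((d : ℝ)^2 * ε) := by
      intro v hv
      have hvd : ∑ i, v i = d := homog_support_sum hf hv
      have hvle : ∀ i, v i ≤ d := fun i =>
        hvd ▸ Finset.single_le_sum (fun j _ => Nat.zero_le _) (Finset.mem_univ i)
      rw [← mul_sub, abs_mul]
      have hmain : |(∏ i, ∏ k ∈ Finset.range (v i), (t i - k * ε)) - ∏ i, t i ^ v i|
          ≤ (d : ℝ)^2 * ε := by
        have h2 : (∏ i, t i ^ v i) = ∏ i, ∏ _k ∈ Finset.range (v i), t i := by
          simp [Finset.prod_const, Finset.card_range]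
        rw [h2, Finset.prod_sigma' Finset.univ (fun i => Finset.range (v i))
            (fun i k => t i - k * ε),
          Finset.prod_sigma' Finset.univ (fun i => Finset.range (v i)) (fun i _k => t i)]
        have hbk : ∀ (i : Fin n) (k : ℕ), k ∈ Finset.range (v i) → (k : ℝ) * ε ≤ 1 := by
          intro i k hk
          rw [Finset.mem_range] at hk
          have hkd : (k : ℝ) ≤ (d : ℝ) := by
            have : k ≤ d := le_trans (Nat.le_of_lt_succ (Nat.lt_succ_of_lt hk)) (hvle i)
            exact_mod_cast this
          calc (k : ℝ) * ε ≤ (d : ℝ) * ε := by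
                apply mul_le_mul_of_nonneg_right hkd hε
            _ ≤ 1 := hdε
        refine (prod_diff_bound _ _ _ ?_ ?_).trans ?_
        · rintro ⟨i, k⟩ hik
          rw [Finset.mem_sigma] at hik
          have hb := hbk i k hik.2
          have h01 := ht01 i
          have hkε : 0 ≤ (k : ℝ) * ε := by positivity
          rw [abs_le]
          constructor <;> simp only [] <;> nlinarith [h01.1, h01.2]
        · rintro ⟨i, k⟩ _
          have h01 := ht01 i
          rw [abs_le]
          constructor <;> simp only [] <;> linarith [h01.1, h01.2]
        · rw [← Finset.sum_sigma' Finset.univ (fun i => Finset.range (v i))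
              (fun i k => |t i - (k : ℝ) * ε - t i|)]
          have hstep : ∀ i ∈ Finset.univ (α := Fin n), ∀ k ∈ Finset.range (v i),
              |t i - (k : ℝ) * ε - t i| ≤ (d : ℝ) * ε := by
            intro i _ k hk
            have : |t i - (k : ℝ) * ε - t i| = (k : ℝ) * ε := by
              rw [show t i - (k : ℝ) * ε - t i = -((k:ℝ)*ε) by ring, abs_neg,
                abs_of_nonneg (by positivity)]
            rw [this]
            rw [Finset.mem_range] at hk
            have hkd : (k : ℝ) ≤ (d : ℝ) := by
              have : k ≤ d := le_trans (Nat.le_of_lt_succ (Nat.lt_succ_of_lt hk)) (hvle i)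
              exact_mod_cast this
            exact mul_le_mul_of_nonneg_right hkd hε
          calc (∑ i, ∑ k ∈ Finset.range (v i), |t i - (k : ℝ) * ε - t i|)
              ≤ ∑ i, ∑ _k ∈ Finset.range (v i), (d : ℝ) * ε := by
                apply Finset.sum_le_sum
                intro i hi
                exact Finset.sum_le_sum (hstep i hi)
            _ = ∑ i, (v i : ℝ) * ((d : ℝ) * ε) := by
                simp [Finset.sum_const, Finset.card_range, mul_comm]
            _ = (d : ℝ)^2 * ε := by
                rw [← Finset.sum_mul]
                rw [← Nat.cast_sum, hvd]
                ring
      exact mul_le_mul_of_nonneg_left hmain (abs_nonneg _)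
    refine (Finset.sum_le_sum hterm).trans ?_
    rw [← Finset.sum_mul]
    rw [hA_def]
    have hs : 0 ≤ ∑ v ∈ f.support, |MvPolynomial.coeff v f| :=
      Finset.sum_nonneg (fun v _ => abs_nonneg _)
    nlinarith [hε, hs]
  have hAε : A * ε < c := by
    have h1 : A / c < (⌈A / c⌉₊ + 1 : ℝ) := by
      have := Nat.le_ceil (A / c)
      push_cast
      linarith
    have h2 : ((⌈A / c⌉₊ + 1 : ℕ) : ℝ) ≤ T := by
      rw [hT_def]
      push_cast
      have : (⌈A / c⌉₊ + 1 : ℝ) ≤ (N : ℝ) := by exact_mod_cast hN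
      linarith [Nat.cast_nonneg (α := ℝ) d]
    have hAcT : A / c < T := by push_cast at h2; linarith
    rw [hε_def]
    rw [div_lt_iff₀ hc] at hAcT
    calc A * (1 / T) = A / T := by ring
      _ < c := by rw [div_lt_iff₀ hT]; linarith [mul_comm c T]
  have hFpos : 0 < F := by
    have h1 : c ≤ MvPolynomial.eval t f := isMinOn_iff.mp hx0min t htΔ
    have h2 : F ≥ MvPolynomial.eval t f - A * ε := by
      have := abs_sub_le_iff.mp hFbound
      linarith [this.2]
    linarith
  -- conclude
  have hfacpos : 0 < ∏ i, ((α i)! : ℝ) := by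
    apply Finset.prod_pos
    intro i _
    exact_mod_cast Nat.factorial_pos (α i)
  have hNfac : 0 < (N ! : ℝ) := by exact_mod_cast Nat.factorial_pos N
  nlinarith [hkey2, mul_pos (mul_pos hNfac (pow_pos hT d)) hFpos]


lemma abs_prod_le_one' {ι : Type*} (s : Finset ι) (u : ι → ℝ) (h : ∀ i ∈ s, |u i| ≤ 1) :
    |∏ i ∈ s, u i| ≤ 1 := by
  rw [Finset.abs_prod]
  exact Finset.prod_le_one (fun i _ => abs_nonneg _) h

lemma mem_simplex_bounds {n : ℕ} {x : Fin n → ℝ} (hx : x ∈ stdSimplex ℝ (Fin n)) :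
    ∀ i, 0 ≤ x i ∧ x i ≤ 1 := by
  intro i
  refine ⟨hx.1 i, ?_⟩
  have := Finset.single_le_sum (f := x) (fun j _ => hx.1 j) (Finset.mem_univ i)
  rw [hx.2] at this
  exact this

lemma eval_abs_le {n : ℕ} (g : MvPolynomial (Fin n) ℝ) {x : Fin n → ℝ}
    (hx : x ∈ stdSimplex ℝ (Fin n)) :
    |MvPolynomial.eval x g| ≤ ∑ v ∈ g.support, |MvPolynomial.coeff v g| := by
  have hx01 := mem_simplex_bounds hx
  rw [MvPolynomial.eval_eq']
  refine (Finset.abs_sum_le_sum_abs _ _).trans (Finset.sum_le_sum ?_)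
  intro v _
  rw [abs_mul]
  have h1 : |∏ i, x i ^ v i| ≤ 1 := by
    apply abs_prod_le_one'
    intro i _
    rw [abs_of_nonneg (pow_nonneg (hx01 i).1 _)]
    exact pow_le_one₀ (hx01 i).1 (hx01 i).2
  exact mul_le_of_le_one_right (abs_nonneg _) h1

lemma pow_add_lower (K : ℕ) (a b : ℝ) (ha : 0 ≤ a) (hb : 0 ≤ b) :
    a^(K+1) + (K+1) * a^K * b ≤ (a + b)^(K+1) := by
  induction K with
  | zero => norm_num
  | succ K ih =>
    have h1 : (a + b) * (a^(K+1) + (K+1) * a^K * b) ≤ (a + b) * (a + b)^(K+1) :=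
      mul_le_mul_of_nonneg_left ih (add_nonneg ha hb)
    have h2 : (a + b)^(K+2) = (a + b) * (a + b)^(K+1) := by ring
    have h3 : 0 ≤ a^K * b^2 := mul_nonneg (pow_nonneg ha K) (sq_nonneg b)
    have h4 : 0 ≤ a^(K+1) * b := mul_nonneg (pow_nonneg ha (K+1)) hb
    have h5 : 0 ≤ (K:ℝ) * (a^K * b^2) := mul_nonneg (Nat.cast_nonneg K) h3
    push_cast
    calc a^(K+1+1) + ((K:ℝ) + 1 + 1) * a^(K+1) * b
        ≤ (a + b) * (a^(K+1) + ((K:ℝ)+1) * a^K * b) := by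
          have hexp : (a + b) * (a^(K+1) + ((K:ℝ)+1) * a^K * b)
              = a^(K+1+1) + ((K:ℝ)+1+1)*a^(K+1)*b + (((K:ℝ)+1)*(a^K*b^2)) := by ring
          have h6 : 0 ≤ ((K:ℝ)+1)*(a^K*b^2) := by positivity
          linarith
      _ ≤ (a + b) * (a + b)^(K+1) := h1
      _ = (a + b)^(K+1+1) := by ring

lemma eval_sigma_one {n : ℕ} {x : Fin n → ℝ} (hx : x ∈ stdSimplex ℝ (Fin n)) :
    MvPolynomial.eval x (∑ i, MvPolynomial.X i : MvPolynomial (Fin n) ℝ) = 1 := by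
  rw [map_sum]
  simp only [MvPolynomial.eval_X]
  exact hx.2

lemma simplex_ne_zero {n : ℕ} {x : Fin n → ℝ} (hx : x ∈ stdSimplex ℝ (Fin n)) : x ≠ 0 := by
  intro h
  have := hx.2
  rw [h] at this
  simp at this

set_option maxHeartbeats 2000000 in
/-- (Dickinson–Povh Positivstellensatz.) If homogeneous `f₀` is positive on the
nonnegative orthant minus the origin intersected with the constraints
`fⱼ ≥ 0`, then `(x₁ + ⋯ + xₙ)^p · f₀ = g₀ + ∑ⱼ fⱼ · gⱼ` for some `p` and some
homogeneous polynomials `g₀, gⱼ` with nonnegative coefficients. -/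
theorem stmt14 {n m : ℕ} (f0 : MvPolynomial (Fin n) ℝ)
    (f : Fin m → MvPolynomial (Fin n) ℝ)
    (h0 : ∃ d : ℕ, f0.IsHomogeneous d)
    (hf : ∀ j, ∃ d : ℕ, (f j).IsHomogeneous d)
    (hpos : ∀ x : Fin n → ℝ, x ≠ 0 → (∀ i, 0 ≤ x i) →
      (∀ j, 0 ≤ MvPolynomial.eval x (f j)) → 0 < MvPolynomial.eval x f0) :
    ∃ (p : ℕ) (g0 : MvPolynomial (Fin n) ℝ)
      (g : Fin m → MvPolynomial (Fin n) ℝ),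
      (∃ d : ℕ, g0.IsHomogeneous d) ∧
      (∀ j, ∃ d : ℕ, (g j).IsHomogeneous d) ∧
      (∀ mono : Fin n →₀ ℕ, 0 ≤ MvPolynomial.coeff mono g0) ∧
      (∀ j, ∀ mono : Fin n →₀ ℕ, 0 ≤ MvPolynomial.coeff mono (g j)) ∧
      (∑ i, MvPolynomial.X i) ^ p * f0 = g0 + ∑ j, f j * g j := by
  classical
  rcases Nat.eq_zero_or_pos n with hn0 | hn
  · -- degenerate case n = 0
    subst hn0
    refine ⟨1, 0, fun _ => 0, ⟨0, MvPolynomial.isHomogeneous_zero _ _ _⟩,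
      fun j => ⟨0, MvPolynomial.isHomogeneous_zero _ _ _⟩,
      fun mono => le_refl _, fun j mono => le_refl _, ?_⟩
    rw [Finset.univ_eq_empty, Finset.sum_empty, pow_one, zero_mul]
    simp
  obtain ⟨d0, hd0⟩ := h0
  choose dj hdj using hf
  set σp : MvPolynomial (Fin n) ℝ := ∑ i, MvPolynomial.X i with hσp_def
  set Δ := stdSimplex ℝ (Fin n) with hΔ_def
  -- uniform coefficient bound
  set C : ℝ := 1 + ∑ j, ∑ v ∈ (f j).support, |MvPolynomial.coeff v (f j)| with hC_def
  have hC1 : 1 ≤ C := by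
    have : (0:ℝ) ≤ ∑ j, ∑ v ∈ (f j).support, |MvPolynomial.coeff v (f j)| :=
      Finset.sum_nonneg fun j _ => Finset.sum_nonneg fun v _ => abs_nonneg _
    rw [hC_def]; linarith
  have hC0 : 0 < C := by linarith
  have hCbound : ∀ (j : Fin m), ∀ x ∈ Δ, |MvPolynomial.eval x (f j)| < C := by
    intro j x hx
    have h1 := eval_abs_le (f j) hx
    have h2 : ∑ v ∈ (f j).support, |MvPolynomial.coeff v (f j)|
        ≤ ∑ j, ∑ v ∈ (f j).support, |MvPolynomial.coeff v (f j)| :=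
      Finset.single_le_sum (f := fun j => ∑ v ∈ (f j).support, |MvPolynomial.coeff v (f j)|)
        (fun j _ => Finset.sum_nonneg fun v _ => abs_nonneg _) (Finset.mem_univ j)
    rw [hC_def]; linarith
  set C0 : ℝ := ∑ v ∈ f0.support, |MvPolynomial.coeff v f0| with hC0_def
  have hC0bound : ∀ x ∈ Δ, |MvPolynomial.eval x f0| ≤ C0 := fun x hx => eval_abs_le f0 hx
  have hC0nonneg : (0:ℝ) ≤ C0 := Finset.sum_nonneg fun v _ => abs_nonneg _
  clear_value C C0
  -- the feasible set B
  set B : Set (Fin n → ℝ) := Δ ∩ {x | ∀ j, 0 ≤ MvPolynomial.eval x (f j)} with hB_def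
  have hBclosed : IsClosed {x : Fin n → ℝ | ∀ j, 0 ≤ MvPolynomial.eval x (f j)} := by
    have : {x : Fin n → ℝ | ∀ j, 0 ≤ MvPolynomial.eval x (f j)}
        = ⋂ j, {x | 0 ≤ MvPolynomial.eval x (f j)} := by
      ext x; simp
    rw [this]
    exact isClosed_iInter fun j =>
      isClosed_le continuous_const (MvPolynomial.continuous_eval (p := f j))
  have hBcompact : IsCompact B := (isCompact_stdSimplex ℝ (Fin n)).inter_right hBclosed
  have hBpos : ∀ x ∈ B, 0 < MvPolynomial.eval x f0 := by
    rintro x ⟨hxΔ, hxf⟩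
    exact hpos x (simplex_ne_zero hxΔ) (fun i => hxΔ.1 i) hxf
  obtain ⟨c, hc, hcB⟩ : ∃ c : ℝ, 0 < c ∧ ∀ x ∈ B, c ≤ MvPolynomial.eval x f0 := by
    rcases Set.eq_empty_or_nonempty B with hBe | hBne
    · exact ⟨1, one_pos, fun x hx => by rw [hBe] at hx; exact absurd hx (Set.notMem_empty x)⟩
    · obtain ⟨xB, hxB, hxBmin⟩ := hBcompact.exists_isMinOn hBne
        (MvPolynomial.continuous_eval (p := f0)).continuousOn
      exact ⟨MvPolynomial.eval xB f0, hBpos xB hxB, fun x hx => isMinOn_iff.mp hxBmin x hx⟩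
  -- the gap function G
  set G : (Fin n → ℝ) → ℝ := fun x => ∑ j, (min (MvPolynomial.eval x (f j)) 0)^2 with hG_def
  have hGcont : Continuous G := by
    apply continuous_finset_sum
    intro j _
    exact (((MvPolynomial.continuous_eval (p := f j)).min continuous_const).pow 2)
  have hGnonneg : ∀ x, 0 ≤ G x := fun x => Finset.sum_nonneg fun j _ => sq_nonneg _
  have hGB : ∀ x ∈ Δ, G x = 0 → x ∈ B := by
    intro x hxΔ hGx
    refine ⟨hxΔ, fun j => ?_⟩
    have h1 : ∀ j ∈ Finset.univ, (0:ℝ) ≤ (min (MvPolynomial.eval x (f j)) 0)^2 :=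
      fun j _ => sq_nonneg _
    have h2 := (Finset.sum_eq_zero_iff_of_nonneg h1).mp hGx j (Finset.mem_univ j)
    have h3 : min (MvPolynomial.eval x (f j)) 0 = 0 := by
      have := sq_eq_zero_iff.mp h2
      exact this
    rw [min_eq_right_iff] at h3
    exact h3
  -- positive lower bound for G on the bad set
  set Kbad : Set (Fin n → ℝ) := Δ ∩ {x | MvPolynomial.eval x f0 ≤ c/2} with hKbad_def
  have hKbadcompact : IsCompact Kbad := (isCompact_stdSimplex ℝ (Fin n)).inter_right
    (isClosed_le (MvPolynomial.continuous_eval (p := f0)) continuous_const)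
  obtain ⟨γ, hγ, hγK⟩ : ∃ γ : ℝ, 0 < γ ∧ ∀ x ∈ Kbad, γ ≤ G x := by
    rcases Set.eq_empty_or_nonempty Kbad with hKe | hKne
    · exact ⟨1, one_pos, fun x hx => by rw [hKe] at hx; exact absurd hx (Set.notMem_empty x)⟩
    · obtain ⟨y, hy, hymin⟩ := hKbadcompact.exists_isMinOn hKne hGcont.continuousOn
      refine ⟨G y, ?_, fun x hx => isMinOn_iff.mp hymin x hx⟩
      rcases lt_or_eq_of_le (hGnonneg y) with h | h
      · exact h
      · exfalso
        have hyB : y ∈ B := hGB y hy.1 h.symm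
        have h1 := hcB y hyB
        have h2 := hy.2
        simp only [Set.mem_setOf_eq] at h2
        linarith
  set lam : ℝ := (C0 + c/2 + 1)/γ with hlam_def
  have hlam : 0 < lam := by
    apply div_pos _ hγ
    linarith
  have hclaim : ∀ x ∈ Δ, c/2 ≤ MvPolynomial.eval x f0 + lam * G x := by
    intro x hxΔ
    by_cases hxc : MvPolynomial.eval x f0 ≤ c/2
    · have hxK : x ∈ Kbad := ⟨hxΔ, hxc⟩
      have h1 := hγK x hxK
      have h2 : lam * γ ≤ lam * G x := mul_le_mul_of_nonneg_left h1 (le_of_lt hlam)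
      have h3 : lam * γ = C0 + c/2 + 1 := by
        rw [hlam_def]; field_simp
      have h4 := (abs_le.mp (hC0bound x hxΔ)).1
      linarith
    · push_neg at hxc
      have := mul_nonneg (le_of_lt hlam) (hGnonneg x)
      linarith
  clear_value lam
  -- choose K
  set K : ℕ := ⌈(4 * lam * m * C^2)/c⌉₊ + 1 with hK_def
  obtain ⟨K', hK'⟩ : ∃ K', K = K' + 1 := ⟨⌈(4 * lam * m * C^2)/c⌉₊, rfl⟩
  have hKbig : lam * m * C^2 / K ≤ c/4 := by
    have h1 : (4 * lam * m * C^2)/c < (K : ℝ) := by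
      calc (4 * lam * m * C^2)/c ≤ (⌈(4 * lam * ↑m * C^2)/c⌉₊ : ℝ) := Nat.le_ceil _
        _ < (K : ℝ) := by rw [hK_def]; exact_mod_cast Nat.lt_succ_self _
    have hKpos : (0:ℝ) < (K:ℝ) := by rw [hK_def]; positivity
    rw [div_le_iff₀ hKpos]
    rw [div_lt_iff₀ hc] at h1
    have hm : (0:ℝ) ≤ lam * m * C^2 := by positivity
    linarith
  clear_value K
  have hKposR : (0:ℝ) < (K:ℝ) := by rw [hK']; positivity
  -- the multiplier polynomials
  set a : ℝ := lam / (K * C^K') with ha_def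
  have ha : 0 < a := div_pos hlam (mul_pos hKposR (pow_pos hC0 K'))
  clear_value a
  set q : Fin m → MvPolynomial (Fin n) ℝ := fun j =>
    MvPolynomial.C a * (MvPolynomial.C C * σp ^ (dj j) - f j) ^ K with hq_def
  have hσhomog : σp.IsHomogeneous 1 :=
    MvPolynomial.IsHomogeneous.sum Finset.univ _ 1 (fun i _ => MvPolynomial.isHomogeneous_X _ i)
  have hqhomog : ∀ j, (q j).IsHomogeneous (dj j * K) := by
    intro j
    have h1 : (MvPolynomial.C C * σp ^ (dj j) - f j).IsHomogeneous (dj j) := by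
      apply MvPolynomial.IsHomogeneous.sub _ (hdj j)
      simpa using (hσhomog.pow (dj j)).C_mul C
    simpa [hq_def, mul_comm] using (h1.pow K).C_mul a
  have hevalq : ∀ j, ∀ x ∈ Δ, MvPolynomial.eval x (q j)
      = a * (C - MvPolynomial.eval x (f j))^K := by
    intro j x hx
    rw [hq_def]
    simp only [map_mul, map_sub, map_pow, MvPolynomial.eval_C]
    rw [eval_sigma_one hx]
    ring
  have hqpos : ∀ j, ∀ x ∈ Δ, 0 < MvPolynomial.eval x (q j) := by
    intro j x hx
    rw [hevalq j x hx]
    have := (abs_lt.mp (hCbound j x hx)).2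
    have hsub : 0 < C - MvPolynomial.eval x (f j) := by linarith
    positivity
  -- the key pointwise inequality
  have hkeyΔ : ∀ x ∈ Δ, c/4 ≤ MvPolynomial.eval x f0
      - ∑ j, MvPolynomial.eval x (f j) * MvPolynomial.eval x (q j) := by
    intro x hxΔ
    have hterm : ∀ j : Fin m, MvPolynomial.eval x (f j) * MvPolynomial.eval x (q j)
        + lam * (min (MvPolynomial.eval x (f j)) 0)^2 ≤ lam * C^2 / K := by
      intro j
      set u : ℝ := MvPolynomial.eval x (f j) with hu_def
      have hub := abs_lt.mp (hCbound j x hxΔ)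
      have hKpos : (0:ℝ) < (K:ℝ) := hKposR
      rw [hevalq j x hxΔ, ← hu_def]
      rcases le_or_gt 0 u with hu0 | hu0
      · -- u ≥ 0
        rw [min_eq_right hu0]
        have h1 : (C - u)^K ≤ C^K := by
          apply pow_le_pow_left₀ (by linarith) (by linarith)
        have h2 : u * (a * (C - u)^K) ≤ C * (a * C^K) := by
          have hCu : (0:ℝ) ≤ C - u := by rw [hu_def]; linarith [hub.2]
          have hCK : (0:ℝ) ≤ (C - u)^K := pow_nonneg hCu K
          have h5 : a * (C - u)^K ≤ a * C^K := mul_le_mul_of_nonneg_left h1 (le_of_lt ha)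
          calc u * (a * (C - u)^K) ≤ C * (a * (C - u)^K) :=
                mul_le_mul_of_nonneg_right (by rw [hu_def]; linarith [hub.2])
                  (mul_nonneg (le_of_lt ha) hCK)
            _ ≤ C * (a * C^K) := mul_le_mul_of_nonneg_left h5 (by linarith)
        have h3 : C * (a * C^K) = lam * C^2 / K := by
          rw [ha_def, hK']
          field_simp
          ring
        calc u * (a * (C - u)^K) + lam * 0^2 = u * (a * (C - u)^K) := by ring
          _ ≤ C * (a * C^K) := h2
          _ = lam * C^2 / K := h3
      · -- u < 0
        rw [min_eq_left (le_of_lt hu0)]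
        set s : ℝ := -u with hs_def
        have hs : 0 < s := by rw [hs_def]; linarith
        clear_value s
        have hlow : C^(K'+1) + (K'+1) * C^K' * s ≤ (C + s)^(K'+1) :=
          pow_add_lower K' C s (by linarith) (le_of_lt hs)
        have h1 : (K:ℝ) * C^K' * s ≤ (C + s)^K := by
          rw [hK']
          push_cast
          have hCpow : (0:ℝ) ≤ C^(K'+1) := by positivity
          linarith
        have h2 : u * (a * (C - u)^K) ≤ -(lam * s^2) := by
          have hCu : C - u = C + s := by rw [hs_def]; ring
          rw [hCu]
          have h3 : a * ((K:ℝ) * C^K' * s) ≤ a * (C + s)^K :=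
            mul_le_mul_of_nonneg_left h1 (le_of_lt ha)
          have h4 : a * ((K:ℝ) * C^K' * s) = lam * s := by
            rw [ha_def]
            field_simp
          have h5 : lam * s ≤ a * (C + s)^K := by rw [← h4]; exact h3
          have h6 : u * (a * (C + s)^K) = -(s * (a * (C + s)^K)) := by
            rw [hs_def]; ring
          rw [h6]
          have h7 : s * (lam * s) ≤ s * (a * (C + s)^K) :=
            mul_le_mul_of_nonneg_left h5 (le_of_lt hs)
          nlinarith
        have h8 : u^2 = s^2 := by rw [hs_def]; ring
        have h9 : (0:ℝ) ≤ lam * C^2 / K :=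
          (div_pos (mul_pos hlam (pow_pos hC0 2)) hKposR).le
        rw [h8] at *
        nlinarith
    have hsum : ∑ j, (MvPolynomial.eval x (f j) * MvPolynomial.eval x (q j))
        ≤ (m : ℝ) * (lam * C^2 / K) - lam * G x := by
      have h1 : ∑ j, (MvPolynomial.eval x (f j) * MvPolynomial.eval x (q j)
          + lam * (min (MvPolynomial.eval x (f j)) 0)^2) ≤ ∑ _j : Fin m, lam * C^2 / K :=
        Finset.sum_le_sum fun j _ => hterm j
      rw [Finset.sum_add_distrib, Finset.sum_const, Finset.card_univ, Fintype.card_fin,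
        nsmul_eq_mul] at h1
      rw [hG_def]
      rw [Finset.mul_sum]
      push_cast at h1 ⊢
      linarith
    have hKb2 : (m:ℝ) * (lam * C^2/K) ≤ c/4 := by
      have : (m:ℝ) * (lam * C^2/K) = lam * m * C^2 / K := by ring
      rw [this]
      exact hKbig
    have := hclaim x hxΔ
    linarith
  -- build the homogeneous combination F
  set D : ℕ := d0 + ∑ j, dj j * (K + 1) with hD_def
  have hDj : ∀ j : Fin m, dj j * (K + 1) ≤ D := by
    intro j
    rw [hD_def]
    exact le_trans (Finset.single_le_sum (f := fun j => dj j * (K+1))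
      (fun j _ => Nat.zero_le _) (Finset.mem_univ j)) (Nat.le_add_left _ _)
  set F : MvPolynomial (Fin n) ℝ := σp ^ (D - d0) * f0
      - ∑ j, σp ^ (D - dj j * (K + 1)) * (f j * q j) with hF_def
  have hFhomog : F.IsHomogeneous D := by
    apply MvPolynomial.IsHomogeneous.sub
    · have := (hσhomog.pow (D - d0)).mul hd0
      simpa [Nat.sub_add_cancel (by omega : d0 ≤ D), mul_one] using this
    · apply MvPolynomial.IsHomogeneous.sum
      intro j _
      have := (hσhomog.pow (D - dj j * (K+1))).mul ((hdj j).mul (hqhomog j))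
      have harith : 1 * (D - dj j * (K+1)) + (dj j + dj j * K) = D := by
        have h2 := hDj j
        have h1 : dj j + dj j * K = dj j * (K+1) := by ring
        obtain ⟨e, he⟩ : ∃ e, dj j * (K+1) = e := ⟨_, rfl⟩
        rw [he] at h2
        rw [h1, he]
        omega
      rwa [harith] at this
  have hFΔ : ∀ x ∈ Δ, 0 < MvPolynomial.eval x F := by
    intro x hx
    rw [hF_def]
    rw [map_sub, map_sum]
    simp only [map_mul, map_pow]
    rw [eval_sigma_one hx]
    simp only [one_pow, one_mul]
    have := hkeyΔ x hx
    linarith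
  -- apply Polya
  obtain ⟨NF, hNF⟩ := polya hn F hFhomog hFΔ
  have hqpolya : ∀ j : Fin m, ∃ N0 : ℕ, ∀ N, N0 ≤ N → ∀ α : Fin n →₀ ℕ,
      0 ≤ MvPolynomial.coeff α (σp ^ N * q j) :=
    fun j => polya hn (q j) (hqhomog j) (hqpos j)
  choose Nq hNq using hqpolya
  set M : ℕ := NF + ∑ j, Nq j with hM_def
  have hMF : NF ≤ M := by rw [hM_def]; omega
  have hMq : ∀ j, Nq j ≤ M + (D - dj j * (K + 1)) := by
    intro j
    have := Finset.single_le_sum (f := Nq) (fun j _ => Nat.zero_le _) (Finset.mem_univ j)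
    rw [hM_def]; omega
  refine ⟨M + (D - d0), σp ^ M * F,
    fun j => σp ^ (M + (D - dj j * (K + 1))) * q j,
    ⟨M + D, (by simpa using (hσhomog.pow M).mul hFhomog)⟩,
    fun j => ⟨M + (D - dj j * (K+1)) + dj j * K,
      (by simpa using (hσhomog.pow (M + (D - dj j * (K+1)))).mul (hqhomog j))⟩,
    fun mono => hNF M hMF mono,
    fun j mono => hNq j _ (hMq j) mono, ?_⟩
  -- the algebraic identity
  rw [hF_def, mul_sub, Finset.mul_sum]
  have h1 : σp ^ M * (σp ^ (D - d0) * f0) = σp ^ (M + (D - d0)) * f0 := by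
    rw [pow_add]; ring
  have h2 : ∀ j : Fin m, σp ^ M * (σp ^ (D - dj j * (K + 1)) * (f j * q j))
      = f j * (σp ^ (M + (D - dj j * (K + 1))) * q j) := by
    intro j
    rw [pow_add]; ring
  rw [h1, Finset.sum_congr rfl (fun j _ => h2 j)]
  ring
end
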